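/- arXiv:1812.08394 — 4 statements merged into one kernel-verified Lean document; each statement's English description precedes it below -/
import Mathlib

section
/- Let φ:(0,∞)→(0,∞) be almost increasing, i.e. there is a constant A≥1 with φ(t) ≤ A·φ(s) whenever 0<t<s. Then the following are equivalent: (1) there is a constant C>0 such that ∫_r^∞ dt/(φ(t)·t) ≤ C/φ(r) for all r>0; (2) there exists m₀ ∈ ℕ such that φ(2^{m₀} r) > 2φ(r) for all r>0. -/
open MeasureTheory Set
open scoped ENNReal NNReal

/-- for an almost increasing `φ : (0,∞) → (0,∞)` (with almost
increasing constant `A ≥ 1`), the integral condition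
`∫_r^∞ dt/(φ(t)t) ≤ C/φ(r)` (for all `r>0`, some `C>0`) holds iff there is
`m₀ ∈ ℕ` with `φ(2^{m₀} r) > 2 φ(r)` for all `r>0`. -/
theorem integral_condition_iff_doubling_growth
    (φ : ℝ → ℝ) (hpos : ∀ t, 0 < t → 0 < φ t)
    (A : ℝ) (hA : 1 ≤ A)
    (hai : ∀ t s, 0 < t → t < s → φ t ≤ A * φ s) :
    (∃ C : ℝ, 0 < C ∧ ∀ r : ℝ, 0 < r →
        ∫⁻ t in Set.Ioi r, ENNReal.ofReal (1 / (φ t * t)) ≤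
          ENNReal.ofReal (C / φ r)) ↔
      (∃ m₀ : ℕ, ∀ r : ℝ, 0 < r → 2 * φ r < φ ((2 : ℝ) ^ m₀ * r)) := by
  have hA0 : 0 < A := lt_of_lt_of_le one_pos hA
  constructor
  · rintro ⟨C, hC, hint⟩
    have hlog2 : 0 < Real.log 2 := Real.log_pos one_lt_two
    set m₀ : ℕ := ⌈2 * A * C / Real.log 2⌉₊ + 1 with hm₀def
    refine ⟨m₀, fun r hr => ?_⟩
    have hm : 2 * A * C < (m₀ : ℝ) * Real.log 2 := by
      have h1 : 2 * A * C / Real.log 2 < (m₀ : ℝ) := by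
        have := Nat.le_ceil (2 * A * C / Real.log 2)
        have h2 : ((⌈2 * A * C / Real.log 2⌉₊ : ℝ)) < (m₀ : ℝ) := by
          rw [hm₀def]; push_cast; linarith
        linarith
      calc 2 * A * C = (2 * A * C / Real.log 2) * Real.log 2 := by
            field_simp
        _ < (m₀ : ℝ) * Real.log 2 := by
            exact mul_lt_mul_of_pos_right h1 hlog2
    set R : ℝ := (2 : ℝ) ^ m₀ * r with hRdef
    have h2m : (1 : ℝ) < 2 ^ m₀ := one_lt_pow₀ one_lt_two (by omega)
    have hrR : r < R := by
      rw [hRdef]; nlinarith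
    have hR0 : 0 < R := hr.trans hrR
    have hφR : 0 < φ R := hpos R hR0
    have hφr : 0 < φ r := hpos r hr
    set c : ℝ := 1 / (A * φ R) with hcdef
    have hc : 0 < c := by rw [hcdef]; positivity
    -- the integral of c/t over Ioo r R
    have hcont : ContinuousOn (fun t : ℝ => c * (1 / t)) (Icc r R) := by
      apply ContinuousOn.mul continuousOn_const
      apply ContinuousOn.div continuousOn_const continuousOn_id
      intro x hx; exact ne_of_gt (lt_of_lt_of_le hr hx.1)
    have hInt : IntegrableOn (fun t : ℝ => c * (1 / t)) (Ioo r R) := by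
      exact (hcont.integrableOn_Icc).mono_set Ioo_subset_Icc_self
    have hval : ∫ t in Ioo r R, c * (1 / t) = c * ((m₀ : ℝ) * Real.log 2) := by
      rw [← integral_Ioc_eq_integral_Ioo, ← intervalIntegral.integral_of_le hrR.le]
      rw [intervalIntegral.integral_const_mul, integral_one_div (by
        intro h
        rcases Set.mem_uIcc.1 h with h' | h' <;> linarith)]
      have : R / r = 2 ^ m₀ := by field_simp [hRdef]; rw [hRdef]; ring
      rw [this, Real.log_pow]
    have key : ENNReal.ofReal (c * ((m₀ : ℝ) * Real.log 2)) ≤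
        ENNReal.ofReal (C / φ r) := by
      calc ENNReal.ofReal (c * ((m₀ : ℝ) * Real.log 2))
          = ∫⁻ t in Ioo r R, ENNReal.ofReal (c * (1 / t)) := by
            rw [← hval]
            refine ofReal_integral_eq_lintegral_ofReal hInt ?_
            filter_upwards [ae_restrict_mem measurableSet_Ioo] with t ht
            simp only [Pi.zero_apply]
            have ht0 : 0 < t := hr.trans ht.1
            positivity
        _ ≤ ∫⁻ t in Ioo r R, ENNReal.ofReal (1 / (φ t * t)) := by
            rw [← lintegral_indicator measurableSet_Ioo,
              ← lintegral_indicator measurableSet_Ioo]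
            apply lintegral_mono
            intro t
            by_cases ht : t ∈ Ioo r R
            · rw [Set.indicator_of_mem ht, Set.indicator_of_mem ht]
              apply ENNReal.ofReal_le_ofReal
              have ht0 : 0 < t := hr.trans ht.1
              have hφt : 0 < φ t := hpos t ht0
              have h1 : φ t ≤ A * φ R := hai t R ht0 ht.2
              have h2 : φ t * t ≤ (A * φ R) * t := by nlinarith
              have h3 : (1 : ℝ) / ((A * φ R) * t) ≤ 1 / (φ t * t) :=
                one_div_le_one_div_of_le (by positivity) h2
              calc c * (1 / t) = 1 / ((A * φ R) * t) := by
                    rw [hcdef]; field_simp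
                _ ≤ 1 / (φ t * t) := h3
            · rw [Set.indicator_of_notMem ht, Set.indicator_of_notMem ht]
        _ ≤ ∫⁻ t in Ioi r, ENNReal.ofReal (1 / (φ t * t)) :=
            lintegral_mono_set (fun t ht => ht.1)
        _ ≤ ENNReal.ofReal (C / φ r) := hint r hr
    have key2 : c * ((m₀ : ℝ) * Real.log 2) ≤ C / φ r := by
      have hCφ : 0 ≤ C / φ r := by positivity
      exact (ENNReal.ofReal_le_ofReal_iff hCφ).1 key
    -- rearrange
    have hm₀pos : (0 : ℝ) < (m₀ : ℝ) := by positivity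
    rw [hcdef, one_div_mul_eq_div] at key2
    rw [div_le_div_iff₀ (by positivity) hφr] at key2
    -- key2 : m₀ log 2 * φ r ≤ C * (A * φ R)
    by_contra hcon
    push_neg at hcon
    have h6 : 2 * A * C * φ r < (m₀ : ℝ) * Real.log 2 * φ r :=
      mul_lt_mul_of_pos_right hm hφr
    have h7 : C * (A * φ R) ≤ C * (A * (2 * φ r)) := by
      have := mul_le_mul_of_nonneg_left hcon (mul_nonneg hC.le hA0.le)
      nlinarith
    nlinarith
  · rintro ⟨m₀, hm⟩
    have hm₀1 : 1 ≤ m₀ := by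
      rcases Nat.eq_zero_or_pos m₀ with h | h
      · exfalso
        have := hm 1 one_pos
        rw [h] at this
        simp at this
        nlinarith [hpos 1 one_pos]
      · exact h
    set a : ℝ := 2 ^ m₀ with hadef
    have ha1 : 1 < a := one_lt_pow₀ one_lt_two (by omega)
    have ha0 : 0 < a := lt_trans one_pos ha1
    refine ⟨2 * A * (a - 1), by nlinarith, fun r hr => ?_⟩
    have hφr : 0 < φ r := hpos r hr
    have hak : ∀ k : ℕ, 0 < a ^ k * r := fun k => by positivity
    have hgrow : ∀ k : ℕ, 2 ^ k * φ r ≤ φ (a ^ k * r) := by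
      intro k
      induction k with
      | zero => simp
      | succ n ih =>
        have h1 := hm (a ^ n * r) (hak n)
        have heq : (2 : ℝ) ^ m₀ * (a ^ n * r) = a ^ (n + 1) * r := by
          rw [hadef]; ring
        rw [heq] at h1
        calc (2 : ℝ) ^ (n + 1) * φ r = 2 * (2 ^ n * φ r) := by ring
          _ ≤ 2 * φ (a ^ n * r) := by linarith
          _ ≤ φ (a ^ (n + 1) * r) := h1.le
    have hcover : Ioi r ⊆ ⋃ k : ℕ, Ioc (a ^ k * r) (a ^ (k + 1) * r) := by
      intro t ht
      have ht' : r < t := ht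
      have hex : ∃ k : ℕ, t ≤ a ^ (k + 1) * r := by
        obtain ⟨n, hn⟩ := pow_unbounded_of_one_lt (t / r) ha1
        refine ⟨n, ?_⟩
        have h1 : t < a ^ n * r := by
          rw [div_lt_iff₀ hr] at hn; linarith
        have h2 : a ^ n * r ≤ a ^ (n + 1) * r := by
          have : a ^ n ≤ a ^ (n + 1) := pow_le_pow_right₀ ha1.le (by omega)
          nlinarith [pow_pos ha0 n]
        linarith
      classical
      set k := Nat.find hex with hkdef
      have h1 : t ≤ a ^ (k + 1) * r := Nat.find_spec hex
      refine mem_iUnion.2 ⟨k, ?_, h1⟩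
      match hk : k with
      | 0 => simpa using ht'
      | j + 1 =>
        have h2 : ¬ (t ≤ a ^ (j + 1) * r) := by
          have := Nat.find_min hex (m := j) (by omega)
          simpa using this
        push_neg at h2
        exact h2
    calc ∫⁻ t in Ioi r, ENNReal.ofReal (1 / (φ t * t))
        ≤ ∫⁻ t in ⋃ k : ℕ, Ioc (a ^ k * r) (a ^ (k + 1) * r),
            ENNReal.ofReal (1 / (φ t * t)) := lintegral_mono_set hcover
      _ ≤ ∑' k : ℕ, ∫⁻ t in Ioc (a ^ k * r) (a ^ (k + 1) * r),
            ENNReal.ofReal (1 / (φ t * t)) := lintegral_iUnion_le _ _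
      _ ≤ ∑' k : ℕ, ENNReal.ofReal ((A * (a - 1) / φ r) * (1 / 2) ^ k) := by
          apply ENNReal.tsum_le_tsum
          intro k
          set u : ℝ := a ^ k * r with hudef
          set v : ℝ := a ^ (k + 1) * r with hvdef
          have hu0 : 0 < u := hak k
          have huv : u < v := by
            rw [hudef, hvdef]
            have : a ^ k < a ^ (k + 1) := pow_lt_pow_right₀ ha1 (by omega)
            nlinarith
          set M : ℝ := A / (2 ^ k * φ r * u) with hMdef
          have hM0 : 0 < M := by rw [hMdef]; positivity
          have hb : ∀ t ∈ Ioc u v, ENNReal.ofReal (1 / (φ t * t)) ≤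
              ENNReal.ofReal M := by
            intro t ht
            apply ENNReal.ofReal_le_ofReal
            have ht0 : 0 < t := hu0.trans ht.1
            have hφt : 0 < φ t := hpos t ht0
            have h1 : φ u ≤ A * φ t := hai u t hu0 ht.1
            have h2 : 2 ^ k * φ r ≤ φ u := hgrow k
            have h3 : 2 ^ k * φ r * u ≤ A * φ t * t := by
              have h4 : 2 ^ k * φ r ≤ A * φ t := le_trans h2 h1
              exact mul_le_mul h4 ht.1.le hu0.le (by positivity)
            calc (1 : ℝ) / (φ t * t) = A / (A * φ t * t) := by
                  field_simp
              _ ≤ A / (2 ^ k * φ r * u) := by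
                  apply div_le_div_of_nonneg_left hA0.le (by positivity) h3
          calc ∫⁻ t in Ioc u v, ENNReal.ofReal (1 / (φ t * t))
              ≤ ∫⁻ _ in Ioc u v, ENNReal.ofReal M :=
                setLIntegral_mono measurable_const hb
            _ = ENNReal.ofReal M * volume (Ioc u v) := setLIntegral_const _ _
            _ = ENNReal.ofReal M * ENNReal.ofReal (v - u) := by
                rw [Real.volume_Ioc]
            _ = ENNReal.ofReal (M * (v - u)) := by
                rw [ENNReal.ofReal_mul hM0.le]
            _ = ENNReal.ofReal ((A * (a - 1) / φ r) * (1 / 2) ^ k) := by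
                congr 1
                rw [hMdef, hudef, hvdef]
                have h2k : (0:ℝ) < 2 ^ k := by positivity
                have hak' : (0:ℝ) < a ^ k := pow_pos ha0 k
                have h12 : ((1:ℝ) / 2) ^ k * 2 ^ k = 1 := by rw [← mul_pow]; norm_num
                field_simp
                linear_combination (a ^ k - a * a ^ k) * h12
      _ = ENNReal.ofReal (2 * (A * (a - 1) / φ r)) := by
          have hx0 : 0 ≤ A * (a - 1) / φ r :=
            div_nonneg (mul_nonneg hA0.le (by linarith)) hφr.le
          rw [← ENNReal.ofReal_tsum_of_nonneg
            (fun k => mul_nonneg hx0 (by positivity))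
            ((summable_geometric_of_lt_one (by norm_num) (by norm_num)).mul_left _)]
          congr 1
          rw [tsum_mul_left, tsum_geometric_of_lt_one (by norm_num) (by norm_num)]
          norm_num
          ring
      _ ≤ ENNReal.ofReal (2 * A * (a - 1) / φ r) := by
          apply le_of_eq
          congr 1
          ring
end

section
/- Let ψ:(0,∞)→[0,∞) be locally integrable and let D>0 satisfy ∫_r^∞ ψ(t)·t^{−1} dt ≤ D·ψ(r) for all r>0. Then for every ε with 0<ε<D^{−1} and every r>0, ∫_r^∞ ψ(t)·t^{ε−1} dt ≤ (r^ε/(1−Dε))·∫_r^∞ ψ(t)·t^{−1} dt ≤ (D/(1−Dε))·ψ(r)·r^ε. -/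
open MeasureTheory Set
open scoped ENNReal NNReal

/-- Nakai: if `ψ : (0,∞) → [0,∞)` is nonnegative, measurable and
locally integrable on `(0,∞)`, and `∫_r^∞ ψ(t) t⁻¹ dt ≤ D ψ(r)` for all `r>0`,
then for `0 < ε < D⁻¹` and all `r>0`,
`∫_r^∞ ψ(t) t^{ε-1} dt ≤ (r^ε/(1-Dε)) ∫_r^∞ ψ(t) t⁻¹ dt ≤ (D/(1-Dε)) ψ(r) r^ε`. -/
theorem nakai_integral_upper (ψ : ℝ → ℝ) (hmeas : Measurable ψ)
    (hnn : ∀ t, 0 < t → 0 ≤ ψ t)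
    (hloc : LocallyIntegrableOn ψ (Set.Ioi 0) volume)
    (D : ℝ) (hD : 0 < D)
    (h : ∀ r : ℝ, 0 < r →
      ∫⁻ t in Set.Ioi r, ENNReal.ofReal (ψ t / t) ≤ ENNReal.ofReal (D * ψ r))
    (ε : ℝ) (hε : 0 < ε) (hεD : ε < D⁻¹) (r : ℝ) (hr : 0 < r) :
    (∫⁻ t in Set.Ioi r, ENNReal.ofReal (ψ t * t ^ (ε - 1))) ≤
        ENNReal.ofReal (r ^ ε / (1 - D * ε)) *
          (∫⁻ t in Set.Ioi r, ENNReal.ofReal (ψ t / t)) ∧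
      ENNReal.ofReal (r ^ ε / (1 - D * ε)) *
          (∫⁻ t in Set.Ioi r, ENNReal.ofReal (ψ t / t)) ≤
        ENNReal.ofReal (D / (1 - D * ε) * (ψ r * r ^ ε)) := by
  have hDε : D * ε < 1 := by
    have := mul_lt_mul_of_pos_left hεD hD
    rwa [mul_inv_cancel₀ hD.ne'] at this
  have h1Dε : 0 < 1 - D * ε := by linarith
  set g : ℝ → ℝ≥0∞ := fun t => ENNReal.ofReal (ψ t / t) with hgdef
  set φf : ℝ → ℝ≥0∞ := fun t => ENNReal.ofReal (ψ t * t ^ (ε - 1)) with hφdef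
  set c : ℝ → ℝ≥0∞ := fun s => ENNReal.ofReal (ε * s ^ (ε - 1)) with hcdef
  have hmg : Measurable g := (hmeas.div measurable_id).ennreal_ofReal
  have hmφ : Measurable φf :=
    (hmeas.mul (measurable_id.pow_const (ε - 1))).ennreal_ofReal
  have hmc : Measurable c :=
    ((measurable_id.pow_const (ε - 1)).const_mul ε).ennreal_ofReal
  set F : ℝ≥0∞ := ∫⁻ t in Set.Ioi r, g t with hFdef
  have hFle : F ≤ ENNReal.ofReal (D * ψ r) := h r hr
  have hFfin : F ≠ ⊤ := (lt_of_le_of_lt hFle ENNReal.ofReal_lt_top).ne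
  -- the ∫_r^t ε s^(ε-1) ds = t^ε - r^ε computation
  have hcalc : ∀ t : ℝ, r < t →
      ∫⁻ s in Set.Ioo r t, c s = ENNReal.ofReal (t ^ ε - r ^ ε) := by
    intro t ht
    have hint : IntegrableOn (fun s : ℝ => ε * s ^ (ε - 1)) (Set.Ioo r t) volume := by
      refine (ContinuousOn.integrableOn_Icc ?_).mono_set Set.Ioo_subset_Icc_self
      refine ContinuousOn.const_smul (fun x hx => ?_) ε
      exact (Real.continuousAt_rpow_const x (ε - 1)
        (Or.inl (ne_of_gt (lt_of_lt_of_le hr hx.1)))).continuousWithinAt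
    rw [← ofReal_integral_eq_lintegral_ofReal hint ?_]
    · congr 1
      rw [← MeasureTheory.integral_Ioc_eq_integral_Ioo,
        ← intervalIntegral.integral_of_le ht.le]
      rw [intervalIntegral.integral_const_mul, integral_rpow (Or.inl (by linarith))]
      have : ε - 1 + 1 = ε := by ring
      rw [this]
      field_simp
    · filter_upwards [ae_restrict_mem measurableSet_Ioo] with s hs
      have hs0 : 0 < s := lt_trans hr hs.1
      positivity
  -- the main truncated estimate
  have key : ∀ R : ℝ, r < R →
      (∫⁻ t in Set.Ioo r R, φf t) ≤ ENNReal.ofReal (r ^ ε / (1 - D * ε)) * F := by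
    intro R hR
    set IR : ℝ≥0∞ := ∫⁻ t in Set.Ioo r R, φf t with hIRdef
    -- finiteness of IR
    have hψint : IntegrableOn ψ (Set.Icc r R) volume :=
      hloc.integrableOn_compact_subset
        (fun x hx => lt_of_lt_of_le hr hx.1) isCompact_Icc
    have hfin : IR ≠ ⊤ := by
      set C : ℝ := r ^ (ε - 1) + R ^ (ε - 1) with hCdef
      have hbound : ∀ t ∈ Set.Ioo r R, φf t ≤ ENNReal.ofReal (C * ψ t) := by
        intro t ht
        have ht0 : 0 < t := lt_trans hr ht.1
        have h1 : t ^ (ε - 1) ≤ C := by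
          rcases le_or_gt 0 (ε - 1) with he | he
          · have : t ^ (ε - 1) ≤ R ^ (ε - 1) :=
              Real.rpow_le_rpow ht0.le ht.2.le he
            have h2 : 0 ≤ r ^ (ε - 1) := Real.rpow_nonneg hr.le _
            linarith
          · have : t ^ (ε - 1) ≤ r ^ (ε - 1) :=
              Real.rpow_le_rpow_of_nonpos hr ht.1.le he.le
            have h2 : 0 ≤ R ^ (ε - 1) := Real.rpow_nonneg (lt_trans hr hR).le _
            linarith
        refine ENNReal.ofReal_le_ofReal ?_
        rw [mul_comm C (ψ t)]
        exact mul_le_mul_of_nonneg_left h1 (hnn t ht0)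
      have hCψ : Integrable (fun t => C * ψ t) (volume.restrict (Set.Ioo r R)) :=
        ((hψint.mono_set Set.Ioo_subset_Icc_self).const_mul C)
      have : IR ≤ ∫⁻ t in Set.Ioo r R, ENNReal.ofReal (C * ψ t) :=
        setLIntegral_mono (hmeas.const_mul C).ennreal_ofReal hbound
      exact (lt_of_le_of_lt this hCψ.lintegral_lt_top).ne
    -- key pointwise identity
    have hA : ∀ t ∈ Set.Ioo r R,
        φf t = ENNReal.ofReal (r ^ ε) * g t + (∫⁻ s in Set.Ioo r t, c s) * g t := by
      intro t ht
      have ht0 : 0 < t := lt_trans hr ht.1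
      have hrt : r ^ ε ≤ t ^ ε := Real.rpow_le_rpow hr.le ht.1.le hε.le
      rw [hcalc t ht.1, ← ENNReal.ofReal_mul (Real.rpow_nonneg hr.le _),
        ← ENNReal.ofReal_mul (by linarith),
        ← ENNReal.ofReal_add (mul_nonneg (Real.rpow_nonneg hr.le _)
          (div_nonneg (hnn t ht0) ht0.le))
          (mul_nonneg (by linarith) (div_nonneg (hnn t ht0) ht0.le))]
      simp only [hφdef]
      congr 1
      rw [Real.rpow_sub ht0, Real.rpow_one]
      field_simp
      ring
    -- swap kernel
    set Φ : ℝ × ℝ → ℝ≥0∞ := fun p => if p.1 < p.2 then c p.1 * g p.2 else 0 with hΦdef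
    have hmΦ : Measurable Φ := by
      refine Measurable.ite (measurableSet_lt measurable_fst measurable_snd) ?_ measurable_const
      exact (hmc.comp measurable_fst).mul (hmg.comp measurable_snd)
    have hinner_t : ∀ t ∈ Set.Ioo r R,
        (∫⁻ s in Set.Ioo r R, Φ (s, t)) = ∫⁻ s in Set.Ioo r t, c s * g t := by
      intro t ht
      have heq : ∀ s : ℝ, Φ (s, t) = (Set.Iio t).indicator (fun s => c s * g t) s := by
        intro s
        simp only [hΦdef, Set.indicator_apply, Set.mem_Iio]
      simp_rw [heq]
      rw [lintegral_indicator measurableSet_Iio, Measure.restrict_restrict measurableSet_Iio]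
      rw [show Set.Iio t ∩ Set.Ioo r R = Set.Ioo r t by
        ext x
        simp only [Set.mem_inter_iff, Set.mem_Iio, Set.mem_Ioo]
        constructor
        · rintro ⟨hx1, hx2, hx3⟩; exact ⟨hx2, hx1⟩
        · rintro ⟨hx1, hx2⟩; exact ⟨hx2, hx1, lt_of_lt_of_le hx2 ht.2.le⟩]
    have hinner_s : ∀ s ∈ Set.Ioo r R,
        (∫⁻ t in Set.Ioo r R, Φ (s, t)) = c s * ∫⁻ t in Set.Ioo s R, g t := by
      intro s hs
      have heq : ∀ t : ℝ, Φ (s, t) = (Set.Ioi s).indicator (fun t => c s * g t) t := by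
        intro t
        simp only [hΦdef, Set.indicator_apply, Set.mem_Ioi]
      simp_rw [heq]
      rw [lintegral_indicator measurableSet_Ioi, Measure.restrict_restrict measurableSet_Ioi]
      rw [show Set.Ioi s ∩ Set.Ioo r R = Set.Ioo s R by
        ext x
        simp only [Set.mem_inter_iff, Set.mem_Ioi, Set.mem_Ioo]
        constructor
        · rintro ⟨hx1, hx2, hx3⟩; exact ⟨hx1, hx3⟩
        · rintro ⟨hx1, hx2⟩; exact ⟨hx1, lt_trans hs.1 hx1, hx2⟩]
      exact lintegral_const_mul _ hmg
    -- decompose IR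
    have hIR : IR = ENNReal.ofReal (r ^ ε) * (∫⁻ t in Set.Ioo r R, g t)
        + ∫⁻ t in Set.Ioo r R, ∫⁻ s in Set.Ioo r R, Φ (s, t) := by
      rw [hIRdef, setLIntegral_congr_fun measurableSet_Ioo hA,
        lintegral_add_left (hmg.const_mul _), lintegral_const_mul _ hmg]
      congr 1
      refine setLIntegral_congr_fun measurableSet_Ioo (fun t ht => ?_)
      rw [hinner_t t ht, lintegral_mul_const _ hmc]
    -- swap and bound the second term
    have hswap : (∫⁻ t in Set.Ioo r R, ∫⁻ s in Set.Ioo r R, Φ (s, t))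
        = ∫⁻ s in Set.Ioo r R, ∫⁻ t in Set.Ioo r R, Φ (s, t) := by
      exact lintegral_lintegral_swap ((hmΦ.comp measurable_swap).aemeasurable)
    have hT : (∫⁻ t in Set.Ioo r R, ∫⁻ s in Set.Ioo r R, Φ (s, t))
        ≤ ENNReal.ofReal (D * ε) * IR := by
      rw [hswap]
      have hb : ∀ s ∈ Set.Ioo r R,
          (∫⁻ t in Set.Ioo r R, Φ (s, t)) ≤ ENNReal.ofReal (D * ε) * φf s := by
        intro s hs
        have hs0 : 0 < s := lt_trans hr hs.1
        rw [hinner_s s hs]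
        have h1 : (∫⁻ t in Set.Ioo s R, g t) ≤ ENNReal.ofReal (D * ψ s) :=
          le_trans (lintegral_mono_set fun x hx => hx.1) (h s hs0)
        calc c s * ∫⁻ t in Set.Ioo s R, g t ≤ c s * ENNReal.ofReal (D * ψ s) :=
              mul_le_mul_of_nonneg_left h1 (by positivity)
          _ = ENNReal.ofReal (D * ε) * φf s := by
              rw [hcdef, hφdef]
              rw [← ENNReal.ofReal_mul (by positivity), ← ENNReal.ofReal_mul (by positivity)]
              congr 1
              ring
      calc (∫⁻ s in Set.Ioo r R, ∫⁻ t in Set.Ioo r R, Φ (s, t))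
          ≤ ∫⁻ s in Set.Ioo r R, ENNReal.ofReal (D * ε) * φf s :=
            setLIntegral_mono (hmφ.const_mul _) hb
        _ = ENNReal.ofReal (D * ε) * IR := lintegral_const_mul _ hmφ
    have hmain : IR ≤ ENNReal.ofReal (r ^ ε) * F + ENNReal.ofReal (D * ε) * IR := by
      calc IR = ENNReal.ofReal (r ^ ε) * (∫⁻ t in Set.Ioo r R, g t)
            + ∫⁻ t in Set.Ioo r R, ∫⁻ s in Set.Ioo r R, Φ (s, t) := hIR
        _ ≤ ENNReal.ofReal (r ^ ε) * F + ENNReal.ofReal (D * ε) * IR := by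
            refine add_le_add (mul_le_mul_of_nonneg_left ?_ (by positivity)) hT
            exact lintegral_mono_set fun x hx => hx.1
    -- solve the inequality
    have h2 : ENNReal.ofReal (1 - D * ε) * IR ≤ ENNReal.ofReal (r ^ ε) * F := by
      rw [ENNReal.ofReal_sub _ (by positivity), ENNReal.ofReal_one,
        ENNReal.sub_mul (fun _ _ => hfin), one_mul]
      exact tsub_le_iff_right.mpr hmain
    calc IR = ENNReal.ofReal ((1 - D * ε)⁻¹) * (ENNReal.ofReal (1 - D * ε) * IR) := by
          rw [← mul_assoc, ← ENNReal.ofReal_mul (by positivity),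
            inv_mul_cancel₀ h1Dε.ne', ENNReal.ofReal_one, one_mul]
      _ ≤ ENNReal.ofReal ((1 - D * ε)⁻¹) * (ENNReal.ofReal (r ^ ε) * F) :=
          mul_le_mul_of_nonneg_left h2 (by positivity)
      _ = ENNReal.ofReal (r ^ ε / (1 - D * ε)) * F := by
          rw [← mul_assoc, ← ENNReal.ofReal_mul (by positivity)]
          congr 2
          field_simp
  -- pass to the limit
  have hI : (∫⁻ t in Set.Ioi r, φf t) ≤ ENNReal.ofReal (r ^ ε / (1 - D * ε)) * F := by
    have hU : Set.Ioi r = ⋃ n : ℕ, Set.Ioo r (r + n + 1) := by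
      ext x
      simp only [Set.mem_Ioi, Set.mem_iUnion, Set.mem_Ioo]
      constructor
      · intro hx
        refine ⟨⌈x - r⌉₊, hx, ?_⟩
        have := Nat.le_ceil (x - r)
        linarith
      · rintro ⟨n, hn, _⟩; exact hn
    have hdir : Directed (· ⊆ ·) fun n : ℕ => Set.Ioo r (r + n + 1) := by
      refine (Monotone.directed_le ?_)
      intro n m hnm
      refine Set.Ioo_subset_Ioo le_rfl ?_
      have : (n : ℝ) ≤ m := Nat.cast_le.mpr hnm
      linarith
    rw [hU, setLIntegral_iUnion_of_directed _ hdir]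
    refine iSup_le fun n => key _ ?_
    have : (0 : ℝ) ≤ n := Nat.cast_nonneg n
    linarith
  refine ⟨hI, ?_⟩
  calc ENNReal.ofReal (r ^ ε / (1 - D * ε)) * F
      ≤ ENNReal.ofReal (r ^ ε / (1 - D * ε)) * ENNReal.ofReal (D * ψ r) :=
        mul_le_mul_of_nonneg_left hFle (by positivity)
    _ = ENNReal.ofReal (D / (1 - D * ε) * (ψ r * r ^ ε)) := by
        rw [← ENNReal.ofReal_mul (by positivity)]
        congr 1
        field_simp
end

section
/- Let ψ:(0,∞)→(0,∞) be measurable and let D>0 satisfy ∫_0^r ψ(t)·t^{−1} dt ≤ D·ψ(r) for all r>0. Then for every ε with 0<ε<D^{−1} and every r>0, ∫_0^r ψ(t)·t^{−1−ε} dt ≤ (1/(1−Dε))·r^{−ε}·∫_0^r ψ(t)·t^{−1} dt ≤ (D/(1−Dε))·r^{−ε}·ψ(r). -/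
open MeasureTheory Set
open scoped ENNReal NNReal

lemma nakai_swap (f g : ℝ → ℝ≥0∞) (hf : Measurable f) (hg : Measurable g) (a r : ℝ) :
    ∫⁻ t in Ioc a r, f t * ∫⁻ s in Ioc t r, g s
      = ∫⁻ s in Ioc a r, (∫⁻ t in Ioc a s, f t) * g s := by
  have hmem : ∀ t s : ℝ, s ∈ Ioc a r → ((if t < s then f t * g s else 0)
      = f t * (Ioc t r).indicator g s) := by
    intro t s hs
    by_cases hts : t < s
    · simp [Set.indicator, hts, hs.2]
    · simp [Set.indicator, hts]
  calc ∫⁻ t in Ioc a r, f t * ∫⁻ s in Ioc t r, g s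
      = ∫⁻ t in Ioc a r, ∫⁻ s in Ioc a r, (if t < s then f t * g s else 0) := by
        refine setLIntegral_congr_fun measurableSet_Ioc (fun t ht => ?_)
        rw [setLIntegral_congr_fun measurableSet_Ioc (fun s hs => hmem t s hs),
          lintegral_const_mul _ (hg.indicator measurableSet_Ioc),
          lintegral_indicator measurableSet_Ioc,
          Measure.restrict_restrict measurableSet_Ioc,
          inter_eq_left.mpr (Ioc_subset_Ioc_left ht.1.le)]
    _ = ∫⁻ s in Ioc a r, ∫⁻ t in Ioc a r, (if t < s then f t * g s else 0) := by
        apply lintegral_lintegral_swap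
        apply Measurable.aemeasurable
        exact Measurable.ite (measurableSet_lt measurable_fst measurable_snd)
          ((hf.comp measurable_fst).mul (hg.comp measurable_snd)) measurable_const
    _ = ∫⁻ s in Ioc a r, (∫⁻ t in Ioc a s, f t) * g s := by
        refine setLIntegral_congr_fun measurableSet_Ioc (fun s hs => ?_)
        have heq : ∀ t : ℝ, (if t < s then f t * g s else 0)
            = (Iio s).indicator (fun t => f t * g s) t := by
          intro t
          by_cases hts : t < s
          · simp [Set.indicator, hts]
          · simp [Set.indicator, hts]
        simp_rw [heq]
        rw [lintegral_indicator measurableSet_Iio, Measure.restrict_restrict measurableSet_Iio,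
          lintegral_mul_const _ hf]
        have hset : Iio s ∩ Ioc a r = Ioo a s := by
          ext t
          simp only [mem_inter_iff, mem_Iio, mem_Ioc, mem_Ioo]
          constructor
          · rintro ⟨h1, h2, h3⟩; exact ⟨h2, h1⟩
          · rintro ⟨h1, h2⟩; exact ⟨h2, h1, h2.le.trans hs.2⟩
        rw [hset, Measure.restrict_congr_set Ioo_ae_eq_Ioc]

lemma nakai_rpow_integral (ε t r : ℝ) (hε : 0 < ε) (ht : 0 < t) (htr : t ≤ r) :
    ∫⁻ s in Ioc t r, ENNReal.ofReal (ε * s ^ (-1 - ε))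
      = ENNReal.ofReal (t ^ (-ε) - r ^ (-ε)) := by
  have hcont : ContinuousOn (fun s : ℝ => ε * s ^ (-1 - ε)) (Icc t r) := by
    apply ContinuousOn.mul continuousOn_const
    apply ContinuousOn.rpow_const continuousOn_id
    intro x hx
    exact Or.inl (ne_of_gt (lt_of_lt_of_le ht hx.1))
  have hint : IntegrableOn (fun s : ℝ => ε * s ^ (-1 - ε)) (Ioc t r) :=
    (hcont.integrableOn_Icc).mono_set Ioc_subset_Icc_self
  rw [← ofReal_integral_eq_lintegral_ofReal hint]
  · congr 1
    rw [← intervalIntegral.integral_of_le htr, intervalIntegral.integral_const_mul,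
      integral_rpow (Or.inr ⟨by linarith, fun hc => by
        rw [uIcc_of_le htr] at hc; linarith [hc.1]⟩)]
    have hne : -1 - ε + 1 = -ε := by ring
    rw [hne, div_neg, mul_neg, ← mul_div_assoc, mul_div_cancel_left₀ _ hε.ne', neg_sub]
  · filter_upwards [ae_restrict_mem measurableSet_Ioc] with s hs
    have : (0:ℝ) < s := lt_trans ht hs.1
    positivity


/-- Nakai: if `ψ : (0,∞) → (0,∞)` is positive and measurable and
`∫_0^r ψ(t) t⁻¹ dt ≤ D ψ(r)` for all `r>0`, then for `0 < ε < D⁻¹` and all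
`r>0`, `∫_0^r ψ(t) t^{-1-ε} dt ≤ (1/(1-Dε)) r^{-ε} ∫_0^r ψ(t) t⁻¹ dt
≤ (D/(1-Dε)) r^{-ε} ψ(r)`. -/
theorem nakai_integral_lower (ψ : ℝ → ℝ) (hmeas : Measurable ψ)
    (hpos : ∀ t, 0 < t → 0 < ψ t)
    (D : ℝ) (hD : 0 < D)
    (h : ∀ r : ℝ, 0 < r →
      ∫⁻ t in Set.Ioc 0 r, ENNReal.ofReal (ψ t / t) ≤ ENNReal.ofReal (D * ψ r))
    (ε : ℝ) (hε : 0 < ε) (hεD : ε < D⁻¹) (r : ℝ) (hr : 0 < r) :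
    (∫⁻ t in Set.Ioc 0 r, ENNReal.ofReal (ψ t * t ^ (-1 - ε))) ≤
        ENNReal.ofReal (1 / (1 - D * ε) * r ^ (-ε)) *
          (∫⁻ t in Set.Ioc 0 r, ENNReal.ofReal (ψ t / t)) ∧
      ENNReal.ofReal (1 / (1 - D * ε) * r ^ (-ε)) *
          (∫⁻ t in Set.Ioc 0 r, ENNReal.ofReal (ψ t / t)) ≤
        ENNReal.ofReal (D / (1 - D * ε) * (r ^ (-ε) * ψ r)) := by
  have hDε : D * ε < 1 := by
    have := mul_lt_mul_of_pos_left hεD hD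
    rwa [mul_inv_cancel₀ hD.ne'] at this
  have hc : (0:ℝ) < 1 - D * ε := by linarith
  set F : ℝ≥0∞ := ∫⁻ t in Set.Ioc 0 r, ENNReal.ofReal (ψ t / t) with hF
  have hFr : F ≤ ENNReal.ofReal (D * ψ r) := h r hr
  have hF_lt : F < ⊤ := lt_of_le_of_lt hFr ENNReal.ofReal_lt_top
  -- measurable functions
  have hw : Measurable fun t : ℝ => ENNReal.ofReal (ψ t / t) :=
    (hmeas.div measurable_id).ennreal_ofReal
  have hfm : Measurable fun t : ℝ => ENNReal.ofReal (ψ t * t ^ (-1 - ε)) :=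
    (hmeas.mul (measurable_id.pow measurable_const)).ennreal_ofReal
  have hG : Measurable fun s : ℝ => ENNReal.ofReal (ε * s ^ (-1 - ε)) :=
    (measurable_const.mul (measurable_id.pow measurable_const)).ennreal_ofReal
  -- pointwise factorization
  have hfac : ∀ t : ℝ, 0 < t → ψ t * t ^ (-1 - ε) = ψ t / t * t ^ (-ε) := by
    intro t ht
    rw [show (-1 - ε : ℝ) = (-1) + (-ε) by ring, Real.rpow_add ht, Real.rpow_neg_one,
      div_eq_mul_inv]
    ring
  -- the key bound on Ioc a r
  have key : ∀ a : ℝ, 0 < a → a < r →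
      (∫⁻ t in Set.Ioc a r, ENNReal.ofReal (ψ t * t ^ (-1 - ε))) ≤
        ENNReal.ofReal (1 / (1 - D * ε)) * (ENNReal.ofReal (r ^ (-ε)) * F) := by
    intro a ha har
    set Ia : ℝ≥0∞ := ∫⁻ t in Set.Ioc a r, ENNReal.ofReal (ψ t * t ^ (-1 - ε)) with hIa
    set B : ℝ≥0∞ := ENNReal.ofReal (r ^ (-ε)) * F with hB
    have hB_lt : B < ⊤ := ENNReal.mul_lt_top ENNReal.ofReal_lt_top hF_lt
    -- finiteness of Ia
    have hIa_lt : Ia < ⊤ := by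
      have hle : Ia ≤ ENNReal.ofReal (a ^ (-ε)) * F := by
        have hstep : Ia ≤ ∫⁻ t in Set.Ioc a r, ENNReal.ofReal (a ^ (-ε)) *
            ENNReal.ofReal (ψ t / t) := by
          refine lintegral_mono_ae ?_
          filter_upwards [ae_restrict_mem measurableSet_Ioc] with t ht
          have ht0 : (0:ℝ) < t := lt_trans ha ht.1
          rw [hfac t ht0, ← ENNReal.ofReal_mul (by positivity), mul_comm (a ^ (-ε))]
          apply ENNReal.ofReal_le_ofReal
          exact mul_le_mul_of_nonneg_left
            (Real.rpow_le_rpow_of_nonpos ha ht.1.le (by linarith))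
            (div_nonneg (hpos t ht0).le ht0.le)
        refine hstep.trans ?_
        rw [lintegral_const_mul _ hw]
        exact mul_le_mul' le_rfl (lintegral_mono_set (Ioc_subset_Ioc_left ha.le))
      exact lt_of_le_of_lt hle (ENNReal.mul_lt_top ENNReal.ofReal_lt_top hF_lt)
    -- the self-improving inequality
    have hself : Ia ≤ B + ENNReal.ofReal (D * ε) * Ia := by
      have hsplit : Ia = (∫⁻ t in Set.Ioc a r, ENNReal.ofReal (ψ t / t) *
            ENNReal.ofReal (r ^ (-ε))) +
          ∫⁻ t in Set.Ioc a r, ENNReal.ofReal (ψ t / t) *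
            ∫⁻ s in Set.Ioc t r, ENNReal.ofReal (ε * s ^ (-1 - ε)) := by
        rw [hIa, ← lintegral_add_left (hw.mul_const _)]
        refine setLIntegral_congr_fun measurableSet_Ioc (fun t ht => ?_)
        have ht0 : (0:ℝ) < t := lt_trans ha ht.1
        rw [nakai_rpow_integral ε t r hε ht0 ht.2, ← mul_add,
          ← ENNReal.ofReal_add (by positivity : (0:ℝ) ≤ r ^ (-ε))
            (sub_nonneg.mpr (Real.rpow_le_rpow_of_nonpos ht0 ht.2 (by linarith : -ε ≤ 0))),
          show r ^ (-ε) + (t ^ (-ε) - r ^ (-ε)) = t ^ (-ε) by ring,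
          hfac t ht0, ENNReal.ofReal_mul (div_nonneg (hpos t ht0).le ht0.le)]
      refine le_trans (le_of_eq hsplit) (add_le_add ?_ ?_)
      · rw [lintegral_mul_const _ hw, hB, mul_comm]
        exact mul_le_mul' le_rfl (lintegral_mono_set (Ioc_subset_Ioc_left ha.le))
      · rw [nakai_swap _ _ hw hG a r]
        calc ∫⁻ s in Set.Ioc a r, (∫⁻ t in Set.Ioc a s, ENNReal.ofReal (ψ t / t)) *
              ENNReal.ofReal (ε * s ^ (-1 - ε))
            ≤ ∫⁻ s in Set.Ioc a r, ENNReal.ofReal (D * ε) *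
              ENNReal.ofReal (ψ s * s ^ (-1 - ε)) := by
              refine lintegral_mono_ae ?_
              filter_upwards [ae_restrict_mem measurableSet_Ioc] with s hs
              have hs0 : (0:ℝ) < s := lt_trans ha hs.1
              have h1 : (∫⁻ t in Set.Ioc a s, ENNReal.ofReal (ψ t / t)) ≤
                  ENNReal.ofReal (D * ψ s) :=
                (lintegral_mono_set (Ioc_subset_Ioc_left ha.le)).trans (h s hs0)
              refine (mul_le_mul' h1 le_rfl).trans ?_
              rw [← ENNReal.ofReal_mul (mul_nonneg hD.le (hpos s hs0).le),
                ← ENNReal.ofReal_mul (by positivity : (0:ℝ) ≤ D * ε)]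
              apply ENNReal.ofReal_le_ofReal
              apply le_of_eq; ring
          _ = ENNReal.ofReal (D * ε) * Ia := lintegral_const_mul _ hfm
    -- solve the inequality
    have hIa_ne : Ia ≠ ⊤ := hIa_lt.ne
    have hB_ne : B ≠ ⊤ := hB_lt.ne
    have hrhs_ne : B + ENNReal.ofReal (D * ε) * Ia ≠ ⊤ :=
      ENNReal.add_ne_top.mpr ⟨hB_ne, ENNReal.mul_ne_top ENNReal.ofReal_ne_top hIa_ne⟩
    have hBt : B.toReal = r ^ (-ε) * F.toReal := by
      rw [hB, ENNReal.toReal_mul, ENNReal.toReal_ofReal (by positivity)]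
    have hreal : Ia.toReal ≤ B.toReal + (D * ε) * Ia.toReal := by
      have h2 := ENNReal.toReal_mono hrhs_ne hself
      calc Ia.toReal ≤ (B + ENNReal.ofReal (D * ε) * Ia).toReal := h2
        _ = B.toReal + (ENNReal.ofReal (D * ε) * Ia).toReal :=
            ENNReal.toReal_add hB_ne (ENNReal.mul_ne_top ENNReal.ofReal_ne_top hIa_ne)
        _ = B.toReal + (D * ε) * Ia.toReal := by
            rw [ENNReal.toReal_mul, ENNReal.toReal_mul,
              ENNReal.toReal_ofReal (show (0:ℝ) ≤ D * ε by positivity)]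
    have hX : Ia.toReal ≤ 1 / (1 - D * ε) * B.toReal := by
      rw [one_div, ← div_eq_inv_mul, le_div_iff₀ hc]
      nlinarith [hreal]
    calc Ia = ENNReal.ofReal Ia.toReal := (ENNReal.ofReal_toReal hIa_ne).symm
      _ ≤ ENNReal.ofReal (1 / (1 - D * ε) * B.toReal) := ENNReal.ofReal_le_ofReal hX
      _ = ENNReal.ofReal (1 / (1 - D * ε)) * ENNReal.ofReal B.toReal := by
          rw [ENNReal.ofReal_mul (by positivity)]
      _ = ENNReal.ofReal (1 / (1 - D * ε)) * B := by rw [ENNReal.ofReal_toReal hB_ne]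
  -- limiting argument
  constructor
  · have hgoal_rhs : ENNReal.ofReal (1 / (1 - D * ε) * r ^ (-ε)) * F
        = ENNReal.ofReal (1 / (1 - D * ε)) * (ENNReal.ofReal (r ^ (-ε)) * F) := by
      rw [ENNReal.ofReal_mul (by positivity), mul_assoc]
    rw [hgoal_rhs]
    -- exhaust Ioc 0 r by Ioc (a n) r
    set f : ℝ → ℝ≥0∞ := fun t => ENNReal.ofReal (ψ t * t ^ (-1 - ε)) with hfdef
    set g : ℕ → ℝ → ℝ≥0∞ := fun n => (Ioc (r / (n + 2)) r).indicator f with hg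
    have han : ∀ n : ℕ, 0 < r / ((n:ℝ) + 2) := fun n => by positivity
    have hanr : ∀ n : ℕ, r / ((n:ℝ) + 2) < r := by
      intro n
      rw [div_lt_iff₀ (by positivity)]
      nlinarith
    have hgm : ∀ n, Measurable (g n) := fun n => hfm.indicator measurableSet_Ioc
    have hmono : Monotone g := by
      intro m n hmn
      apply Set.indicator_le_indicator_of_subset
      · apply Ioc_subset_Ioc_left
        apply div_le_div_of_nonneg_left hr.le (by positivity)
        have := (Nat.cast_le (α := ℝ)).mpr hmn; linarith
      · intro t; simp
    have hsup : ∀ t ∈ Ioc 0 r, (⨆ n, g n t) = f t := by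
      intro t ht
      apply le_antisymm
      · exact iSup_le fun n => Set.indicator_le_self _ _ t
      · obtain ⟨n, hn⟩ := exists_nat_gt (r / t)
        have hlt : r / ((n:ℝ) + 2) < t := by
          rw [div_lt_iff₀ (by positivity)]
          have h2 : r / t < (n:ℝ) + 2 := by push_cast; linarith
          rw [div_lt_iff₀ ht.1] at h2
          linarith
        have : g n t = f t := Set.indicator_of_mem (mem_Ioc.mpr ⟨hlt, ht.2⟩) f
        exact this ▸ le_iSup (fun n => g n t) n
    calc ∫⁻ t in Set.Ioc 0 r, f t = ∫⁻ t in Set.Ioc 0 r, ⨆ n, g n t := by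
          exact setLIntegral_congr_fun measurableSet_Ioc
            (fun t ht => (hsup t ht).symm)
      _ = ⨆ n, ∫⁻ t in Set.Ioc 0 r, g n t := lintegral_iSup hgm hmono
      _ ≤ ENNReal.ofReal (1 / (1 - D * ε)) * (ENNReal.ofReal (r ^ (-ε)) * F) := by
          refine iSup_le fun n => ?_
          rw [hg, lintegral_indicator measurableSet_Ioc,
            Measure.restrict_restrict measurableSet_Ioc,
            inter_eq_left.mpr (Ioc_subset_Ioc_left (han n).le)]
          exact key _ (han n) (hanr n)
  · calc ENNReal.ofReal (1 / (1 - D * ε) * r ^ (-ε)) * F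
        ≤ ENNReal.ofReal (1 / (1 - D * ε) * r ^ (-ε)) * ENNReal.ofReal (D * ψ r) :=
          mul_le_mul' le_rfl hFr
      _ = ENNReal.ofReal (D / (1 - D * ε) * (r ^ (-ε) * ψ r)) := by
          rw [← ENNReal.ofReal_mul (by positivity)]
          congr 1; ring
end

section
/- Let φ, ψ ∈ G₁ and let ρ:(0,∞)→(0,∞) be measurable, satisfying the Dini condition ∫_0^1 ρ(s)/s ds < ∞ and the growth condition: there exist C>0 and 0<2k₁<k₂<∞ with sup_{r/2<s≤r} ρ(s) ≤ C∫_{k₁r}^{k₂r} ρ(s)/s ds for all r>0. Assume there is a constant C₁>0 such that (1/φ(r))·∫_0^r ρ(t)/t dt + ∫_r^∞ ρ(t)/(t·φ(t)) dt ≤ C₁/ψ(r) for all r>0. Then there is a constant C₂>0 such that the generalized fractional integral I_ρ f(x) = ∫_{ℝⁿ} |f(y)|·ρ(|x−y|)/|x−y|^n dy satisfies ‖I_ρ f‖_{M^ψ_1} ≤ C₂·‖f‖_{M^φ_1} for every measurable f, where the norms are the ball-based generalized Morrey norms with q=1. -/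
open MeasureTheory Set
open scoped ENNReal NNReal

/-- The ball-based generalized Morrey norm of an `ℝ≥0∞`-valued function on
Euclidean space. -/
noncomputable def ballMorreyNormE (n : ℕ) (q : ℝ) (φ : ℝ → ℝ)
    (F : EuclideanSpace ℝ (Fin n) → ℝ≥0∞) : ℝ≥0∞ :=
  ⨆ (a : EuclideanSpace ℝ (Fin n)) (r : ℝ) (_ : 0 < r),
    ENNReal.ofReal (φ r) *
      ((volume (Metric.ball a r))⁻¹ *
        ∫⁻ x in Metric.ball a r, (F x) ^ q) ^ (1 / q)

/-- The class `G_q`: nondecreasing functions `φ : (0,∞) → (0,∞)` such that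
`t ↦ t^{-n/q} φ(t)` is nonincreasing on `(0,∞)`. -/
def IsGq (n : ℕ) (q : ℝ) (φ : ℝ → ℝ) : Prop :=
  (∀ t, 0 < t → 0 < φ t) ∧
  (∀ s t, 0 < s → s ≤ t → φ s ≤ φ t) ∧
  (∀ s t, 0 < s → s ≤ t → t ^ (-((n : ℝ) / q)) * φ t ≤ s ^ (-((n : ℝ) / q)) * φ s)

/-- The generalized fractional integral operator
`I_ρ F(x) = ∫ F(y) ρ(|x-y|)/|x-y|^n dy` (applied to `ℝ≥0∞`-valued data). -/
noncomputable def fracIntegral (n : ℕ) (ρ : ℝ → ℝ)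
    (F : EuclideanSpace ℝ (Fin n) → ℝ≥0∞)
    (x : EuclideanSpace ℝ (Fin n)) : ℝ≥0∞ :=
  ∫⁻ y, F y * ENNReal.ofReal (ρ (dist x y) / dist x y ^ n)

section Auxiliary

open Module Metric

/-- Polar-coordinates formula for lower integrals of radial functions with respect to
an additive Haar measure. -/
lemma lintegral_fun_norm_addHaar' {E : Type*} [NormedAddCommGroup E] [NormedSpace ℝ E]
    [MeasurableSpace E] [BorelSpace E] [Nontrivial E] [FiniteDimensional ℝ E]
    (μ : Measure E) [μ.IsAddHaarMeasure] (g : ℝ → ℝ≥0∞) (hg : Measurable g) :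
    ∫⁻ x, g ‖x‖ ∂μ = (finrank ℝ E) * μ (Metric.ball 0 1) *
      ∫⁻ y in Set.Ioi (0:ℝ), ENNReal.ofReal (y ^ (finrank ℝ E - 1)) * g y := by
  have h0 : ∫⁻ x, g ‖x‖ ∂μ = ∫⁻ x : ({(0:E)}ᶜ : Set E), g ‖x.1‖ ∂(μ.comap (↑)) := by
    rw [lintegral_subtype_comap (measurableSet_singleton (0:E)).compl (fun a => g ‖a‖),
      restrict_compl_singleton]
  have h1 : ∫⁻ x : ({(0:E)}ᶜ : Set E), g ‖x.1‖ ∂(μ.comap (↑)) =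
      ∫⁻ p : Metric.sphere (0:E) 1 × Ioi (0:ℝ), g p.2
        ∂(μ.toSphere.prod (.volumeIoiPow (finrank ℝ E - 1))) := by
    have := μ.measurePreserving_homeomorphUnitSphereProd.lintegral_comp
      (f := fun p : Metric.sphere (0:E) 1 × Ioi (0:ℝ) => g p.2)
      (show Measurable fun p : Metric.sphere (0:E) 1 × Ioi (0:ℝ) => g p.2 from
        hg.comp (measurable_subtype_coe.comp measurable_snd))
    simpa using this
  have h2 : ∫⁻ p : Metric.sphere (0:E) 1 × Ioi (0:ℝ), g p.2
        ∂(μ.toSphere.prod (.volumeIoiPow (finrank ℝ E - 1))) =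
      μ.toSphere univ * ∫⁻ y : Ioi (0:ℝ), g y ∂(Measure.volumeIoiPow (finrank ℝ E - 1)) := by
    rw [lintegral_prod (fun p : Metric.sphere (0:E) 1 × Ioi (0:ℝ) => g p.2)
      ((show Measurable fun p : Metric.sphere (0:E) 1 × Ioi (0:ℝ) => g p.2 from
        hg.comp (measurable_subtype_coe.comp measurable_snd)).aemeasurable)]
    simp [lintegral_const, mul_comm]
  have h3 : ∫⁻ y : Ioi (0:ℝ), g y ∂(Measure.volumeIoiPow (finrank ℝ E - 1)) =
      ∫⁻ y in Set.Ioi (0:ℝ), ENNReal.ofReal (y ^ (finrank ℝ E - 1)) * g y := by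
    rw [Measure.volumeIoiPow,
      lintegral_withDensity_eq_lintegral_mul _
        (f := fun r : Ioi (0:ℝ) => ENNReal.ofReal (r.1 ^ (finrank ℝ E - 1)))
        ((measurable_subtype_coe.pow_const _).ennreal_ofReal)
        (show Measurable fun y : Ioi (0:ℝ) => g y.1 from hg.comp measurable_subtype_coe)]
    exact lintegral_subtype_comap measurableSet_Ioi
      (fun a : ℝ => ENNReal.ofReal (a ^ (finrank ℝ E - 1)) * g a)
  rw [h0, h1, h2, h3, Measure.toSphere_apply_univ]

/-- The integral of the kernel `ρ(|x-y|)/|x-y|^n` over a ball is controlled by the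
one-dimensional Dini-type integral. -/
lemma kernel_ball_le (n : ℕ) (hn : 0 < n) (ρ : ℝ → ℝ) (hρ : Measurable ρ)
    (y : EuclideanSpace ℝ (Fin n)) (R : ℝ) :
    ∫⁻ x in Metric.ball y R, ENNReal.ofReal (ρ (dist x y) / dist x y ^ n) ≤
      (n : ℝ≥0∞) * volume (Metric.ball (0 : EuclideanSpace ℝ (Fin n)) 1) *
        ∫⁻ t in Set.Ioc (0:ℝ) R, ENNReal.ofReal (ρ t / t) := by
  haveI : Nonempty (Fin n) := ⟨⟨0, hn⟩⟩
  haveI : Nontrivial (EuclideanSpace ℝ (Fin n)) := by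
    refine ⟨0, EuclideanSpace.single ⟨0, hn⟩ (1:ℝ), fun h => ?_⟩
    have := congrArg (fun v : EuclideanSpace ℝ (Fin n) => v ⟨0, hn⟩) h
    simp at this
  set k : ℝ → ℝ≥0∞ := fun t => ENNReal.ofReal (ρ t / t ^ n) with hk
  have hkm : Measurable k := (hρ.div (measurable_id.pow_const n)).ennreal_ofReal
  have step1 : ∫⁻ x in Metric.ball y R, ENNReal.ofReal (ρ (dist x y) / dist x y ^ n) =
      ∫⁻ z in Metric.ball (0 : EuclideanSpace ℝ (Fin n)) R, k ‖z‖ := by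
    have hmp : MeasurePreserving (fun z : EuclideanSpace ℝ (Fin n) => z + y) volume volume :=
      measurePreserving_add_right volume y
    have hemb : MeasurableEmbedding (fun z : EuclideanSpace ℝ (Fin n) => z + y) :=
      (MeasurableEquiv.addRight y).measurableEmbedding
    have himg : (fun z : EuclideanSpace ℝ (Fin n) => z + y) '' Metric.ball 0 R =
        Metric.ball y R := by
      ext x
      constructor
      · rintro ⟨z, hz, rfl⟩
        simpa [Metric.mem_ball, dist_eq_norm] using mem_ball_zero_iff.1 hz
      · intro hx
        exact ⟨x - y, by simpa [Metric.mem_ball, dist_eq_norm] using hx, sub_add_cancel x y⟩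
    have := hmp.setLIntegral_comp_emb hemb
      (fun x => ENNReal.ofReal (ρ (dist x y) / dist x y ^ n)) (Metric.ball 0 R)
    rw [himg] at this
    rw [← this]
    refine setLIntegral_congr_fun measurableSet_ball (fun z _ => ?_)
    have : dist (z + y) y = ‖z‖ := by simp [dist_eq_norm]
    rw [this]
  have step2 : ∫⁻ z in Metric.ball (0 : EuclideanSpace ℝ (Fin n)) R, k ‖z‖ =
      ∫⁻ z : EuclideanSpace ℝ (Fin n), ((Set.Iio R).indicator k) ‖z‖ := by
    rw [← lintegral_indicator measurableSet_ball]
    refine lintegral_congr fun z => ?_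
    by_cases hz : ‖z‖ < R
    · rw [Set.indicator_of_mem (mem_ball_zero_iff.2 hz),
        Set.indicator_of_mem (show ‖z‖ ∈ Set.Iio R from hz)]
    · rw [Set.indicator_of_notMem (fun h => hz (mem_ball_zero_iff.1 h)),
        Set.indicator_of_notMem (show ‖z‖ ∉ Set.Iio R from hz)]
  have step3 := lintegral_fun_norm_addHaar' (volume : Measure (EuclideanSpace ℝ (Fin n)))
    ((Set.Iio R).indicator k) (hkm.indicator measurableSet_Iio)
  rw [step1, step2, step3, finrank_euclideanSpace_fin]
  refine mul_le_mul_right ?_ _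
  have step4 : ∫⁻ t in Set.Ioi (0:ℝ), ENNReal.ofReal (t ^ (n - 1)) * (Set.Iio R).indicator k t =
      ∫⁻ t in Set.Ioo (0:ℝ) R, ENNReal.ofReal (t ^ (n - 1)) * k t := by
    rw [show (fun t : ℝ => ENNReal.ofReal (t ^ (n - 1)) * (Set.Iio R).indicator k t) =
        (Set.Iio R).indicator (fun t => ENNReal.ofReal (t ^ (n - 1)) * k t) from ?_]
    · rw [lintegral_indicator measurableSet_Iio, Measure.restrict_restrict measurableSet_Iio,
        Set.Iio_inter_Ioi]
    · funext t
      by_cases ht : t ∈ Set.Iio R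
      · rw [Set.indicator_of_mem ht, Set.indicator_of_mem ht]
      · rw [Set.indicator_of_notMem ht, Set.indicator_of_notMem ht, mul_zero]
  rw [step4]
  have step5 : ∫⁻ t in Set.Ioo (0:ℝ) R, ENNReal.ofReal (t ^ (n - 1)) * k t =
      ∫⁻ t in Set.Ioo (0:ℝ) R, ENNReal.ofReal (ρ t / t) := by
    refine setLIntegral_congr_fun measurableSet_Ioo (fun t ht => ?_)
    have ht0 : 0 < t := ht.1
    rw [hk, ← ENNReal.ofReal_mul (by positivity)]
    congr 1
    have hpow : t ^ n = t ^ (n - 1) * t := by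
      conv_lhs => rw [show n = (n - 1) + 1 from (Nat.succ_pred_eq_of_pos hn).symm]
      rw [pow_succ]
    rw [hpow]
    field_simp
  rw [step5]
  exact lintegral_mono_set Set.Ioo_subset_Ioc_self

/-- Simplified form of the Morrey norm for `q = 1`. -/
lemma ballMorreyNormE_one (n : ℕ) (φ : ℝ → ℝ) (F : EuclideanSpace ℝ (Fin n) → ℝ≥0∞) :
    ballMorreyNormE n 1 φ F = ⨆ (a : EuclideanSpace ℝ (Fin n)) (r : ℝ) (_ : 0 < r),
      ENNReal.ofReal (φ r) *
        ((volume (Metric.ball a r))⁻¹ * ∫⁻ x in Metric.ball a r, F x) := by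
  unfold ballMorreyNormE
  norm_num

/-- A function is dominated on each ball by its generalized Morrey norm. -/
lemma morrey_le (n : ℕ) (φ : ℝ → ℝ) (hφpos : ∀ t, 0 < t → 0 < φ t)
    (F : EuclideanSpace ℝ (Fin n) → ℝ≥0∞) (x : EuclideanSpace ℝ (Fin n)) {t : ℝ} (ht : 0 < t) :
    ∫⁻ y in Metric.ball x t, F y ≤
      volume (Metric.ball x t) * (ENNReal.ofReal (φ t))⁻¹ * ballMorreyNormE n 1 φ F := by
  set V := volume (Metric.ball x t) with hV
  have hV0 : V ≠ 0 := (measure_ball_pos volume x ht).ne'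
  have hVtop : V ≠ ⊤ := measure_ball_lt_top.ne
  have ha0 : ENNReal.ofReal (φ t) ≠ 0 := (ENNReal.ofReal_pos.2 (hφpos t ht)).ne'
  have h1 : ENNReal.ofReal (φ t) * (V⁻¹ * ∫⁻ y in Metric.ball x t, F y) ≤
      ballMorreyNormE n 1 φ F := by
    rw [ballMorreyNormE_one]
    exact le_iSup_of_le x (le_iSup_of_le t (le_iSup_of_le ht le_rfl))
  calc ∫⁻ y in Metric.ball x t, F y
      = (V * (ENNReal.ofReal (φ t))⁻¹) *
        (ENNReal.ofReal (φ t) * (V⁻¹ * ∫⁻ y in Metric.ball x t, F y)) := by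
        rw [show (V * (ENNReal.ofReal (φ t))⁻¹) *
          (ENNReal.ofReal (φ t) * (V⁻¹ * ∫⁻ y in Metric.ball x t, F y)) =
          ((ENNReal.ofReal (φ t))⁻¹ * ENNReal.ofReal (φ t)) * (V * V⁻¹) *
            ∫⁻ y in Metric.ball x t, F y from by ring,
          ENNReal.inv_mul_cancel ha0 ENNReal.ofReal_ne_top,
          ENNReal.mul_inv_cancel hV0 hVtop, one_mul, one_mul]
    _ ≤ (V * (ENNReal.ofReal (φ t))⁻¹) * ballMorreyNormE n 1 φ F := mul_le_mul_right h1 _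

/-- The power-type lower estimate encoded in the class `G₁`. -/
lemma isGq_pow_le (n : ℕ) {φ : ℝ → ℝ} (hφ : IsGq n 1 φ) {s t : ℝ} (hs : 0 < s) (hst : s ≤ t) :
    s ^ n * φ t ≤ t ^ n * φ s := by
  have h := hφ.2.2 s t hs hst
  have ht : 0 < t := lt_of_lt_of_le hs hst
  rw [div_one] at h
  rw [Real.rpow_neg ht.le, Real.rpow_neg hs.le, Real.rpow_natCast, Real.rpow_natCast] at h
  have h3 : φ t / t ^ n ≤ φ s / s ^ n := by
    rw [div_eq_inv_mul, div_eq_inv_mul]; exact h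
  have h4 := (div_le_div_iff₀ (pow_pos ht n) (pow_pos hs n)).1 h3
  linarith

end Auxiliary

set_option maxHeartbeats 1000000 in
/-- Spanne-type theorem: let `φ, ψ ∈ G₁` and let `ρ` be positive
measurable satisfying the Dini and growth conditions. If
`(1/φ(r)) ∫_0^r ρ(t)/t dt + ∫_r^∞ ρ(t)/(t φ(t)) dt ≤ C₁/ψ(r)` for all `r>0`,
then `I_ρ` is bounded from `M^φ_1(ℝⁿ)` to `M^ψ_1(ℝⁿ)`. -/
theorem fracIntegral_bounded_spanne (n : ℕ)
    (φ ψ : ℝ → ℝ) (hφ : IsGq n 1 φ) (hψ : IsGq n 1 ψ)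
    (ρ : ℝ → ℝ) (hρmeas : Measurable ρ) (hρpos : ∀ t, 0 < t → 0 < ρ t)
    (hdini : ∫⁻ s in Set.Ioc (0 : ℝ) 1, ENNReal.ofReal (ρ s / s) < ⊤)
    (C k₁ k₂ : ℝ) (hC : 0 < C) (hk₁ : 0 < k₁) (hk : 2 * k₁ < k₂)
    (hgrowth : ∀ r : ℝ, 0 < r → ∀ s : ℝ, r / 2 < s → s ≤ r →
      ENNReal.ofReal (ρ s) ≤
        ENNReal.ofReal C *
          ∫⁻ t in Set.Ioc (k₁ * r) (k₂ * r), ENNReal.ofReal (ρ t / t))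
    (C₁ : ℝ) (hC₁ : 0 < C₁)
    (hkey : ∀ r : ℝ, 0 < r →
      ENNReal.ofReal (1 / φ r) *
          (∫⁻ t in Set.Ioc 0 r, ENNReal.ofReal (ρ t / t)) +
        (∫⁻ t in Set.Ioi r, ENNReal.ofReal (ρ t / (t * φ t))) ≤
        ENNReal.ofReal (C₁ / ψ r)) :
    ∃ C₂ : ℝ, 0 < C₂ ∧ ∀ f : EuclideanSpace ℝ (Fin n) → ℂ, Measurable f →
      ballMorreyNormE n 1 ψ (fracIntegral n ρ (fun y => (‖f y‖₊ : ℝ≥0∞))) ≤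
        ENNReal.ofReal C₂ *
          ballMorreyNormE n 1 φ (fun y => (‖f y‖₊ : ℝ≥0∞)) := by
  obtain ⟨hφpos, hφmono, hφdec⟩ := hφ
  obtain ⟨hψpos, hψmono, hψdec⟩ := hψ
  have hk₂ : 0 < k₂ := by linarith
  rcases Nat.eq_zero_or_pos n with hn0 | hn
  · -- Degenerate case `n = 0`: the space is a single point.
    subst hn0
    have hdist0 : ∀ x y : EuclideanSpace ℝ (Fin 0), dist x y = 0 := by
      intro x y
      simp [EuclideanSpace.dist_eq]
    have hball : ∀ (a : EuclideanSpace ℝ (Fin 0)) (r : ℝ), 0 < r →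
        Metric.ball a r = Set.univ := by
      intro a r hr
      ext x
      simp [Metric.mem_ball, hdist0 x a, hr]
    set V₀ : ℝ≥0∞ := volume (Set.univ : Set (EuclideanSpace ℝ (Fin 0))) with hV₀def
    have hV₀0 : V₀ ≠ 0 := by
      rw [hV₀def, ← hball 0 1 one_pos]
      exact (Metric.measure_ball_pos volume _ one_pos).ne'
    have hV₀top : V₀ ≠ ⊤ := by
      rw [hV₀def, ← hball 0 1 one_pos]
      exact measure_ball_lt_top.ne
    have hconstψ : ∀ r, 0 < r → ψ r = ψ 1 := by
      intro r hr
      have key : ∀ s t, 0 < s → s ≤ t → ψ t ≤ ψ s := by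
        intro s t hs hst
        have h2 := hψdec s t hs hst
        simpa using h2
      rcases le_total r 1 with h | h
      · exact le_antisymm (hψmono r 1 hr h) (key r 1 hr h)
      · exact le_antisymm (key 1 r one_pos h) (hψmono 1 r one_pos h)
    have hφ1 : 0 < φ 1 := hφpos 1 one_pos
    have hψ1 : 0 < ψ 1 := hψpos 1 one_pos
    set c₂ : ℝ := (ψ 1 * |ρ 0| * V₀.toReal + 1) / φ 1 with hc₂def
    have hnum : 0 ≤ ψ 1 * |ρ 0| * V₀.toReal :=
      mul_nonneg (mul_nonneg hψ1.le (abs_nonneg _)) ENNReal.toReal_nonneg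
    refine ⟨c₂, div_pos (by linarith) hφ1, fun f hf => ?_⟩
    set F : EuclideanSpace ℝ (Fin 0) → ℝ≥0∞ := fun y => ((‖f y‖₊ : ℝ≥0∞)) with hFdef
    have hfrac : ∀ x, fracIntegral 0 ρ F x = ENNReal.ofReal (ρ 0) * ∫⁻ y, F y := by
      intro x
      have hpt : ∀ y, F y * ENNReal.ofReal (ρ (dist x y) / dist x y ^ 0) =
          F y * ENNReal.ofReal (ρ 0) := by
        intro y
        rw [hdist0 x y, pow_zero, div_one]
      calc fracIntegral 0 ρ F x = ∫⁻ y, F y * ENNReal.ofReal (ρ 0) := by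
            simp only [fracIntegral]; exact lintegral_congr hpt
        _ = ENNReal.ofReal (ρ 0) * ∫⁻ y, F y := by
            rw [lintegral_mul_const' _ _ ENNReal.ofReal_ne_top, mul_comm]
    rw [ballMorreyNormE_one, ballMorreyNormE_one]
    refine iSup_le fun a => iSup_le fun r => iSup_le fun hr => ?_
    have hIval : ∫⁻ x in Metric.ball a r, fracIntegral 0 ρ F x =
        (ENNReal.ofReal (ρ 0) * ∫⁻ y, F y) * V₀ := by
      rw [hball a r hr, Measure.restrict_univ, lintegral_congr hfrac, lintegral_const,
        ← hV₀def]
    have hRHS : ENNReal.ofReal (φ 1) * (V₀⁻¹ * ∫⁻ y, F y) ≤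
        ⨆ (a' : EuclideanSpace ℝ (Fin 0)) (r' : ℝ) (_ : 0 < r'),
          ENNReal.ofReal (φ r') * ((volume (Metric.ball a' r'))⁻¹ *
            ∫⁻ x in Metric.ball a' r', F x) := by
      refine le_iSup_of_le 0 (le_iSup_of_le 1 (le_iSup_of_le one_pos (le_of_eq ?_)))
      rw [hball 0 1 one_pos, Measure.restrict_univ, ← hV₀def]
    have hkey0 : ENNReal.ofReal (ψ 1) * ENNReal.ofReal (ρ 0) * V₀ ≤
        ENNReal.ofReal c₂ * ENNReal.ofReal (φ 1) := by
      have h1 : ENNReal.ofReal c₂ * ENNReal.ofReal (φ 1) =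
          ENNReal.ofReal (ψ 1 * |ρ 0| * V₀.toReal + 1) := by
        rw [hc₂def, ← ENNReal.ofReal_mul (div_nonneg (by linarith) hφ1.le),
          div_mul_cancel₀ _ hφ1.ne']
      rw [h1, ← ENNReal.ofReal_mul hψ1.le]
      calc ENNReal.ofReal (ψ 1 * ρ 0) * V₀
          = ENNReal.ofReal (ψ 1 * ρ 0) * ENNReal.ofReal V₀.toReal := by
            rw [ENNReal.ofReal_toReal hV₀top]
        _ ≤ ENNReal.ofReal (ψ 1 * |ρ 0|) * ENNReal.ofReal V₀.toReal :=
            mul_le_mul_left (ENNReal.ofReal_le_ofReal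
              (mul_le_mul_of_nonneg_left (le_abs_self _) hψ1.le)) _
        _ = ENNReal.ofReal (ψ 1 * |ρ 0| * V₀.toReal) := by
            rw [← ENNReal.ofReal_mul (mul_nonneg hψ1.le (abs_nonneg _))]
        _ ≤ ENNReal.ofReal (ψ 1 * |ρ 0| * V₀.toReal + 1) :=
            ENNReal.ofReal_le_ofReal (by linarith)
    calc ENNReal.ofReal (ψ r) * ((volume (Metric.ball a r))⁻¹ *
          ∫⁻ x in Metric.ball a r, fracIntegral 0 ρ F x)
        = ENNReal.ofReal (ψ 1) *
          (V₀⁻¹ * ((ENNReal.ofReal (ρ 0) * ∫⁻ y, F y) * V₀)) := by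
          rw [hconstψ r hr, hIval, hball a r hr, ← hV₀def]
      _ = (ENNReal.ofReal (ψ 1) * ENNReal.ofReal (ρ 0) * V₀) * (V₀⁻¹ * ∫⁻ y, F y) := by
          ring
      _ ≤ (ENNReal.ofReal c₂ * ENNReal.ofReal (φ 1)) * (V₀⁻¹ * ∫⁻ y, F y) :=
          mul_le_mul_left hkey0 _
      _ = ENNReal.ofReal c₂ * (ENNReal.ofReal (φ 1) * (V₀⁻¹ * ∫⁻ y, F y)) := by ring
      _ ≤ ENNReal.ofReal c₂ * _ := mul_le_mul_right hRHS _
  -- Main case : n ≥ 1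
  haveI : Nonempty (Fin n) := ⟨⟨0, hn⟩⟩
  haveI hNT : Nontrivial (EuclideanSpace ℝ (Fin n)) := by
    refine ⟨0, EuclideanSpace.single ⟨0, hn⟩ (1:ℝ), fun h => ?_⟩
    have := congrArg (fun v : EuclideanSpace ℝ (Fin n) => v ⟨0, hn⟩) h
    simp at this
  set v₁ : ℝ≥0∞ := volume (Metric.ball (0 : EuclideanSpace ℝ (Fin n)) 1) with hv₁def
  have hv₁0 : v₁ ≠ 0 := (Metric.measure_ball_pos volume _ one_pos).ne'
  have hv₁top : v₁ ≠ ⊤ := measure_ball_lt_top.ne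
  set c₀ : ℝ := min 1 (k₁⁻¹ ^ n) with hc₀def
  have hc₀ : 0 < c₀ := lt_min one_pos (pow_pos (inv_pos.2 hk₁) n)
  set cS : ℝ≥0∞ := 1 + (ENNReal.ofReal (k₁ ^ n))⁻¹ with hcSdef
  have hcStop : cS ≠ ⊤ := by
    have h1 : (ENNReal.ofReal (k₁ ^ n))⁻¹ ≠ ⊤ :=
      ENNReal.inv_ne_top.2 (ENNReal.ofReal_pos.2 (pow_pos hk₁ n)).ne'
    exact ENNReal.add_ne_top.2 ⟨ENNReal.one_ne_top, h1⟩
  set c1 : ℝ≥0∞ := ENNReal.ofReal C * ENNReal.ofReal ((k₂ / k₁) ^ n) * v₁ *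
    (ENNReal.ofReal c₀)⁻¹ with hc1def
  have hc1top : c1 ≠ ⊤ := by
    have h1 : (ENNReal.ofReal c₀)⁻¹ ≠ ⊤ := ENNReal.inv_ne_top.2 (ENNReal.ofReal_pos.2 hc₀).ne'
    exact ENNReal.mul_ne_top (ENNReal.mul_ne_top
      (ENNReal.mul_ne_top ENNReal.ofReal_ne_top ENNReal.ofReal_ne_top) hv₁top) h1
  set Dnear : ℝ≥0∞ := (n : ℝ≥0∞) * v₁ * ENNReal.ofReal (2 ^ n) * ENNReal.ofReal C₁
    with hDneardef
  set Dfar : ℝ≥0∞ := c1 * cS * ENNReal.ofReal C₁ with hDfardef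
  set T : ℝ≥0∞ := Dnear + Dfar with hTdef
  have hTtop : T ≠ ⊤ := by
    refine ENNReal.add_ne_top.2 ⟨?_, ?_⟩
    · exact ENNReal.mul_ne_top (ENNReal.mul_ne_top
        (ENNReal.mul_ne_top (ENNReal.natCast_ne_top n) hv₁top) ENNReal.ofReal_ne_top)
        ENNReal.ofReal_ne_top
    · exact ENNReal.mul_ne_top (ENNReal.mul_ne_top hc1top hcStop) ENNReal.ofReal_ne_top
  have hC₂pos : (0:ℝ) < T.toReal + 1 := by positivity
  refine ⟨T.toReal + 1, hC₂pos, fun f hf => ?_⟩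
  have hTle : T ≤ ENNReal.ofReal (T.toReal + 1) :=
    calc T = ENNReal.ofReal T.toReal := (ENNReal.ofReal_toReal hTtop).symm
      _ ≤ ENNReal.ofReal (T.toReal + 1) := ENNReal.ofReal_le_ofReal (by linarith)
  set F : EuclideanSpace ℝ (Fin n) → ℝ≥0∞ := fun y => ((‖f y‖₊ : ℝ≥0∞)) with hFdef
  have hF : Measurable F := hf.nnnorm.coe_nnreal_ennreal
  have hFfin : ∀ y, F y ≠ ⊤ := fun y => by rw [hFdef]; exact ENNReal.coe_ne_top
  set M : ℝ≥0∞ := ballMorreyNormE n 1 φ F with hMdef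
  by_cases hM : M = ⊤
  · rw [hM, ENNReal.mul_top (ENNReal.ofReal_pos.2 hC₂pos).ne']
    exact le_top
  rw [ballMorreyNormE_one]
  refine iSup_le fun a => iSup_le fun r => iSup_le fun hr => ?_
  set B := Metric.ball a r with hBdef
  have hφr := hφpos r hr
  have hψr := hψpos r hr
  have hVB : volume B = ENNReal.ofReal (r ^ n) * v₁ := by
    rw [hBdef, Measure.addHaar_ball volume a hr.le, finrank_euclideanSpace_fin, hv₁def]
  have hVB0 : volume B ≠ 0 := (Metric.measure_ball_pos volume a hr).ne'
  have hVBtop : volume B ≠ ⊤ := measure_ball_lt_top.ne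
  have hcancelB : (volume B)⁻¹ * volume B = 1 := ENNReal.inv_mul_cancel hVB0 hVBtop
  -- the split of the integral operator
  set g₁ : EuclideanSpace ℝ (Fin n) → EuclideanSpace ℝ (Fin n) → ℝ≥0∞ :=
    fun x y => if dist x y < r then F y * ENNReal.ofReal (ρ (dist x y) / dist x y ^ n) else 0
    with hg₁def
  set g₂ : EuclideanSpace ℝ (Fin n) → EuclideanSpace ℝ (Fin n) → ℝ≥0∞ :=
    fun x y => if r ≤ dist x y then F y * ENNReal.ofReal (ρ (dist x y) / dist x y ^ n) else 0
    with hg₂def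
  have hKmeas : Measurable fun p : EuclideanSpace ℝ (Fin n) × EuclideanSpace ℝ (Fin n) =>
      ENNReal.ofReal (ρ (dist p.1 p.2) / dist p.1 p.2 ^ n) :=
    ((hρmeas.comp measurable_dist).div (measurable_dist.pow_const n)).ennreal_ofReal
  have hg₁meas : Measurable fun p : EuclideanSpace ℝ (Fin n) × EuclideanSpace ℝ (Fin n) =>
      g₁ p.1 p.2 := by
    simp only [hg₁def]
    exact Measurable.ite (measurableSet_lt measurable_dist measurable_const)
      ((hF.comp measurable_snd).mul hKmeas) measurable_const
  have hg₂meas : Measurable fun p : EuclideanSpace ℝ (Fin n) × EuclideanSpace ℝ (Fin n) =>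
      g₂ p.1 p.2 := by
    simp only [hg₂def]
    exact Measurable.ite (measurableSet_le measurable_const measurable_dist)
      ((hF.comp measurable_snd).mul hKmeas) measurable_const
  have hsplit : ∀ x, fracIntegral n ρ F x = (∫⁻ y, g₁ x y) + ∫⁻ y, g₂ x y := by
    intro x
    have hpt : ∀ y, F y * ENNReal.ofReal (ρ (dist x y) / dist x y ^ n) = g₁ x y + g₂ x y := by
      intro y
      simp only [hg₁def, hg₂def]
      by_cases h : dist x y < r
      · rw [if_pos h, if_neg (not_le.2 h), add_zero]
      · rw [if_neg h, if_pos (not_lt.1 h), zero_add]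
    calc fracIntegral n ρ F x = ∫⁻ y, g₁ x y + g₂ x y := by
          simp only [fracIntegral]; exact lintegral_congr hpt
      _ = _ := lintegral_add_left (hg₁meas.comp (measurable_prodMk_left)) _
  have hIsplit : ∫⁻ x in B, fracIntegral n ρ F x =
      (∫⁻ x in B, ∫⁻ y, g₁ x y) + ∫⁻ x in B, ∫⁻ y, g₂ x y := by
    rw [← lintegral_add_left (Measurable.lintegral_prod_right' hg₁meas)]
    exact lintegral_congr hsplit
  -- the key integral hypothesis: local part
  set S₀ : ℝ≥0∞ := ∫⁻ t in Set.Ioc (0:ℝ) r, ENNReal.ofReal (ρ t / t) with hS₀def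
  have hkey1 : (ENNReal.ofReal (φ r))⁻¹ * S₀ ≤ ENNReal.ofReal (C₁ / ψ r) := by
    have h1 : ENNReal.ofReal (1 / φ r) * S₀ ≤ ENNReal.ofReal (C₁ / ψ r) :=
      le_trans le_self_add (hkey r hr)
    rwa [one_div, ENNReal.ofReal_inv_of_pos hφr] at h1
  have hS₀top : S₀ ≠ ⊤ := by
    intro hS
    have h0 : (ENNReal.ofReal (φ r))⁻¹ ≠ 0 := ENNReal.inv_ne_zero.2 ENNReal.ofReal_ne_top
    have h1 := hkey1
    rw [hS, ENNReal.mul_top h0] at h1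
    exact ENNReal.ofReal_ne_top (top_le_iff.1 h1)
  set κ : ℝ≥0∞ := (n : ℝ≥0∞) * v₁ * S₀ with hκdef
  have hκtop : κ ≠ ⊤ :=
    ENNReal.mul_ne_top (ENNReal.mul_ne_top (ENNReal.natCast_ne_top n) hv₁top) hS₀top
  -- NEAR PART
  have hnear1 : (∫⁻ x in B, ∫⁻ y, g₁ x y) ≤ (∫⁻ y in Metric.ball a (2*r), F y) * κ := by
    rw [lintegral_lintegral_swap hg₁meas.aemeasurable]
    have hpt : ∀ y, (∫⁻ x in B, g₁ x y) ≤
        (Metric.ball a (2*r)).indicator (fun y => F y * κ) y := by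
      intro y
      by_cases hy : y ∈ Metric.ball a (2*r)
      · rw [Set.indicator_of_mem hy]
        calc ∫⁻ x in B, g₁ x y
            ≤ ∫⁻ x in B, (Metric.ball y r).indicator
              (fun x => F y * ENNReal.ofReal (ρ (dist x y) / dist x y ^ n)) x := by
              refine setLIntegral_mono' measurableSet_ball fun x _ => ?_
              simp only [hg₁def]
              by_cases h : dist x y < r
              · rw [if_pos h, Set.indicator_of_mem (Metric.mem_ball.2 h)]
              · rw [if_neg h]; exact zero_le
          _ ≤ ∫⁻ x, (Metric.ball y r).indicator
              (fun x => F y * ENNReal.ofReal (ρ (dist x y) / dist x y ^ n)) x :=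
              setLIntegral_le_lintegral _ _
          _ = ∫⁻ x in Metric.ball y r, F y * ENNReal.ofReal (ρ (dist x y) / dist x y ^ n) :=
              lintegral_indicator measurableSet_ball _
          _ = F y * ∫⁻ x in Metric.ball y r, ENNReal.ofReal (ρ (dist x y) / dist x y ^ n) :=
              lintegral_const_mul' _ _ (hFfin y)
          _ ≤ F y * κ := by
              rw [hκdef, hv₁def, hS₀def]
              exact mul_le_mul_right (kernel_ball_le n hn ρ hρmeas y r) _
      · rw [Set.indicator_of_notMem hy]
        have hzero : ∀ x ∈ B, g₁ x y = 0 := by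
          intro x hx
          simp only [hg₁def]
          rw [if_neg]
          have h1 : dist x a < r := Metric.mem_ball.1 hx
          have h2 : 2*r ≤ dist y a := not_lt.1 (fun h => hy (Metric.mem_ball.2 h))
          have h3 : dist y a ≤ dist y x + dist x a := dist_triangle y x a
          have h4 : r ≤ dist x y := by rw [dist_comm]; linarith
          exact not_lt.2 h4
        calc ∫⁻ x in B, g₁ x y ≤ ∫⁻ _x in B, 0 :=
              setLIntegral_mono' measurableSet_ball fun x hx => (hzero x hx).le
          _ = 0 := lintegral_zero
    calc ∫⁻ y, ∫⁻ x in B, g₁ x y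
        ≤ ∫⁻ y, (Metric.ball a (2*r)).indicator (fun y => F y * κ) y := lintegral_mono hpt
      _ = ∫⁻ y in Metric.ball a (2*r), F y * κ := lintegral_indicator measurableSet_ball _
      _ = (∫⁻ y in Metric.ball a (2*r), F y) * κ := lintegral_mul_const' κ _ hκtop
  have hnear2 : (∫⁻ y in Metric.ball a (2*r), F y) ≤
      volume (Metric.ball a (2*r)) * (ENNReal.ofReal (φ (2*r)))⁻¹ * M := by
    rw [hMdef]
    exact morrey_le n φ hφpos F a (by linarith)
  have hV2B : volume (Metric.ball a (2*r)) = ENNReal.ofReal (2^n) * volume B := by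
    rw [Measure.addHaar_ball volume a (by linarith : (0:ℝ) ≤ 2*r), hVB,
      finrank_euclideanSpace_fin, mul_pow, ENNReal.ofReal_mul (by positivity), hv₁def, mul_assoc]
  have hφ2r : (ENNReal.ofReal (φ (2*r)))⁻¹ ≤ (ENNReal.ofReal (φ r))⁻¹ :=
    ENNReal.inv_le_inv' (ENNReal.ofReal_le_ofReal (hφmono r (2*r) hr (by linarith)))
  have Hnear : ENNReal.ofReal (ψ r) * ((volume B)⁻¹ * ∫⁻ x in B, ∫⁻ y, g₁ x y) ≤ Dnear * M := by
    calc ENNReal.ofReal (ψ r) * ((volume B)⁻¹ * ∫⁻ x in B, ∫⁻ y, g₁ x y)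
        ≤ ENNReal.ofReal (ψ r) * ((volume B)⁻¹ *
          ((volume (Metric.ball a (2*r)) * (ENNReal.ofReal (φ (2*r)))⁻¹ * M) * κ)) :=
          mul_le_mul_right (mul_le_mul_right
            (hnear1.trans (mul_le_mul_left hnear2 κ)) _) _
      _ = ((n:ℝ≥0∞) * v₁) * ((volume B)⁻¹ * volume (Metric.ball a (2*r))) *
          ((ENNReal.ofReal (φ (2*r)))⁻¹ * (ENNReal.ofReal (ψ r) * S₀)) * M := by
          rw [hκdef]; ring
      _ ≤ ((n:ℝ≥0∞) * v₁) * (ENNReal.ofReal (2^n)) *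
          ((ENNReal.ofReal (φ r))⁻¹ * (ENNReal.ofReal (ψ r) * S₀)) * M := by
          have hvol2 : (volume B)⁻¹ * volume (Metric.ball a (2*r)) ≤ ENNReal.ofReal (2^n) := by
            rw [hV2B, show (volume B)⁻¹ * (ENNReal.ofReal (2^n) * volume B) =
              ENNReal.ofReal (2^n) * ((volume B)⁻¹ * volume B) from by ring, hcancelB, mul_one]
          exact mul_le_mul_left (mul_le_mul' (mul_le_mul_right hvol2 _)
            (mul_le_mul_left hφ2r _)) M
      _ = ((n:ℝ≥0∞) * v₁) * (ENNReal.ofReal (2^n)) *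
          (ENNReal.ofReal (ψ r) * ((ENNReal.ofReal (φ r))⁻¹ * S₀)) * M := by ring
      _ ≤ ((n:ℝ≥0∞) * v₁) * (ENNReal.ofReal (2^n)) *
          (ENNReal.ofReal (ψ r) * ENNReal.ofReal (C₁ / ψ r)) * M :=
          mul_le_mul_left (mul_le_mul_right (mul_le_mul_right hkey1 _) _) M
      _ = Dnear * M := by
          rw [← ENNReal.ofReal_mul hψr.le, mul_comm (ψ r) (C₁ / ψ r),
            div_mul_cancel₀ _ hψr.ne', hDneardef]
  -- FAR PART
  set w : ℝ → ℝ≥0∞ := fun t => ENNReal.ofReal (ρ t / t) * (ENNReal.ofReal (φ t))⁻¹ with hwdef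
  set Sfull : ℝ≥0∞ := ∫⁻ t in Set.Ioi (k₁ * r), w t with hSfulldef
  have hk₁r : 0 < k₁ * r := mul_pos hk₁ hr
  have hIoiR : ∫⁻ t in Set.Ioi r, w t ≤ ENNReal.ofReal (C₁ / ψ r) := by
    have hcong : ∫⁻ t in Set.Ioi r, w t =
        ∫⁻ t in Set.Ioi r, ENNReal.ofReal (ρ t / (t * φ t)) := by
      refine setLIntegral_congr_fun measurableSet_Ioi (fun t ht => ?_)
      have ht0 : 0 < t := lt_trans hr ht
      simp only [hwdef]
      rw [eq_comm, div_mul_eq_div_div, div_eq_mul_inv (ρ t / t) (φ t),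
        ENNReal.ofReal_mul (le_of_lt (div_pos (hρpos t ht0) ht0)),
        ENNReal.ofReal_inv_of_pos (hφpos t ht0)]
    rw [hcong]
    exact le_trans le_add_self (hkey r hr)
  have hSfull : Sfull ≤ cS * ENNReal.ofReal (C₁ / ψ r) := by
    rcases le_total 1 k₁ with hk1 | hk1
    · have hsub : Set.Ioi (k₁ * r) ⊆ Set.Ioi r := Set.Ioi_subset_Ioi (by nlinarith)
      calc Sfull ≤ ∫⁻ t in Set.Ioi r, w t := lintegral_mono_set hsub
        _ ≤ ENNReal.ofReal (C₁ / ψ r) := hIoiR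
        _ ≤ cS * ENNReal.ofReal (C₁ / ψ r) := by
            rw [hcSdef, add_mul, one_mul]; exact le_self_add
    · have hle : k₁ * r ≤ r := by nlinarith
      have hsplitS : Sfull = (∫⁻ t in Set.Ioc (k₁*r) r, w t) + ∫⁻ t in Set.Ioi r, w t := by
        rw [hSfulldef, ← Set.Ioc_union_Ioi_eq_Ioi hle,
          lintegral_union measurableSet_Ioi Set.Ioc_disjoint_Ioi_same]
      set cmid : ℝ≥0∞ := (ENNReal.ofReal (k₁^n))⁻¹ * (ENNReal.ofReal (φ r))⁻¹ with hcmiddef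
      have hcmidtop : cmid ≠ ⊤ :=
        ENNReal.mul_ne_top (ENNReal.inv_ne_top.2 (ENNReal.ofReal_pos.2 (pow_pos hk₁ n)).ne')
          (ENNReal.inv_ne_top.2 (ENNReal.ofReal_pos.2 hφr).ne')
      have hmid : (∫⁻ t in Set.Ioc (k₁*r) r, w t) ≤
          (ENNReal.ofReal (k₁ ^ n))⁻¹ * ENNReal.ofReal (C₁ / ψ r) := by
        have hpt : ∀ t ∈ Set.Ioc (k₁*r) r, w t ≤ cmid * ENNReal.ofReal (ρ t / t) := by
          intro t ht
          have ht0 : 0 < t := lt_trans hk₁r ht.1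
          have hφt : k₁^n * φ r ≤ φ t := by
            have h1 := isGq_pow_le n ⟨hφpos, hφmono, hφdec⟩ ht0 ht.2
            have h2 : k₁ ^ n * r ^ n ≤ t ^ n := by
              rw [← mul_pow]
              exact pow_le_pow_left₀ (by positivity) ht.1.le n
            have h3 : r^n * (k₁^n * φ r) ≤ r^n * φ t := by
              nlinarith [mul_le_mul_of_nonneg_right h2 (hφpos r hr).le]
            exact le_of_mul_le_mul_left h3 (pow_pos hr n)
          have hinv : (ENNReal.ofReal (φ t))⁻¹ ≤ cmid := by
            have h4 := ENNReal.inv_le_inv' (ENNReal.ofReal_le_ofReal hφt)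
            rwa [ENNReal.ofReal_mul (by positivity),
              ENNReal.mul_inv (Or.inl (ENNReal.ofReal_pos.2 (pow_pos hk₁ n)).ne')
                (Or.inl ENNReal.ofReal_ne_top), ← hcmiddef] at h4
          calc w t = ENNReal.ofReal (ρ t / t) * (ENNReal.ofReal (φ t))⁻¹ := by rw [hwdef]
            _ ≤ ENNReal.ofReal (ρ t / t) * cmid := mul_le_mul_right hinv _
            _ = cmid * ENNReal.ofReal (ρ t / t) := mul_comm _ _
        calc ∫⁻ t in Set.Ioc (k₁*r) r, w t
            ≤ ∫⁻ t in Set.Ioc (k₁*r) r, cmid * ENNReal.ofReal (ρ t / t) :=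
              setLIntegral_mono' measurableSet_Ioc hpt
          _ = cmid * ∫⁻ t in Set.Ioc (k₁*r) r, ENNReal.ofReal (ρ t / t) :=
              lintegral_const_mul' _ _ hcmidtop
          _ ≤ cmid * S₀ := by
              rw [hS₀def]
              exact mul_le_mul_right (lintegral_mono_set (Set.Ioc_subset_Ioc_left hk₁r.le)) _
          _ = (ENNReal.ofReal (k₁^n))⁻¹ * ((ENNReal.ofReal (φ r))⁻¹ * S₀) := by
              rw [hcmiddef]; ring
          _ ≤ (ENNReal.ofReal (k₁^n))⁻¹ * ENNReal.ofReal (C₁ / ψ r) :=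
              mul_le_mul_right hkey1 _
      calc Sfull = _ + _ := hsplitS
        _ ≤ (ENNReal.ofReal (k₁^n))⁻¹ * ENNReal.ofReal (C₁/ψ r) + ENNReal.ofReal (C₁/ψ r) :=
            add_le_add hmid hIoiR
        _ = cS * ENNReal.ofReal (C₁/ψ r) := by rw [hcSdef, add_mul, one_mul, add_comm]
  have hfarpt : ∀ x : EuclideanSpace ℝ (Fin n), (∫⁻ y, g₂ x y) ≤ c1 * M * Sfull := by
    intro x
    set H : EuclideanSpace ℝ (Fin n) → ℝ → ℝ≥0∞ := fun y t =>
      if r ≤ dist x y ∧ k₁ * dist x y < t ∧ t ≤ k₂ * dist x y then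
        (F y * (ENNReal.ofReal (dist x y ^ n))⁻¹ * ENNReal.ofReal C) * ENNReal.ofReal (ρ t / t)
      else 0 with hHdef
    have hdistmeas : Measurable fun p : EuclideanSpace ℝ (Fin n) × ℝ => dist x p.1 :=
      (continuous_const.dist continuous_id).measurable.comp measurable_fst
    have hHmeas : Measurable fun p : EuclideanSpace ℝ (Fin n) × ℝ => H p.1 p.2 := by
      simp only [hHdef]
      refine Measurable.ite ?_ ?_ measurable_const
      · exact MeasurableSet.inter (measurableSet_le measurable_const hdistmeas)
          (MeasurableSet.inter (measurableSet_lt (hdistmeas.const_mul k₁) measurable_snd)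
            (measurableSet_le measurable_snd (hdistmeas.const_mul k₂)))
      · exact (((hF.comp measurable_fst).mul
          (((hdistmeas.pow_const n).ennreal_ofReal).inv)).mul measurable_const).mul
          (((hρmeas.comp measurable_snd).div measurable_snd).ennreal_ofReal)
    have hstep1 : ∀ y, g₂ x y ≤ ∫⁻ t, H y t := by
      intro y
      simp only [hg₂def]
      by_cases hd : r ≤ dist x y
      · rw [if_pos hd]
        have hd0 : 0 < dist x y := lt_of_lt_of_le hr hd
        have hc2top : F y * (ENNReal.ofReal (dist x y ^ n))⁻¹ * ENNReal.ofReal C ≠ ⊤ :=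
          ENNReal.mul_ne_top (ENNReal.mul_ne_top (hFfin y)
            (ENNReal.inv_ne_top.2 (ENNReal.ofReal_pos.2 (pow_pos hd0 n)).ne'))
            ENNReal.ofReal_ne_top
        have hgro := hgrowth (dist x y) hd0 (dist x y) (by linarith) le_rfl
        have hHy : ∀ t, H y t = (Set.Ioc (k₁ * dist x y) (k₂ * dist x y)).indicator
            (fun t => (F y * (ENNReal.ofReal (dist x y ^ n))⁻¹ * ENNReal.ofReal C) *
              ENNReal.ofReal (ρ t / t)) t := by
          intro t
          simp only [hHdef]
          by_cases hmem : t ∈ Set.Ioc (k₁ * dist x y) (k₂ * dist x y)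
          · rw [if_pos ⟨hd, hmem.1, hmem.2⟩, Set.indicator_of_mem hmem]
          · rw [if_neg (fun hcon => hmem ⟨hcon.2.1, hcon.2.2⟩), Set.indicator_of_notMem hmem]
        calc F y * ENNReal.ofReal (ρ (dist x y) / dist x y ^ n)
            = F y * (ENNReal.ofReal (dist x y ^ n))⁻¹ * ENNReal.ofReal (ρ (dist x y)) := by
              rw [ENNReal.ofReal_div_of_pos (pow_pos hd0 n), div_eq_mul_inv]; ring
          _ ≤ F y * (ENNReal.ofReal (dist x y ^ n))⁻¹ * (ENNReal.ofReal C *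
              ∫⁻ t in Set.Ioc (k₁ * dist x y) (k₂ * dist x y), ENNReal.ofReal (ρ t / t)) :=
              mul_le_mul_right hgro _
          _ = (F y * (ENNReal.ofReal (dist x y ^ n))⁻¹ * ENNReal.ofReal C) *
              ∫⁻ t in Set.Ioc (k₁ * dist x y) (k₂ * dist x y), ENNReal.ofReal (ρ t / t) := by
              ring
          _ = ∫⁻ t, H y t := by
              rw [lintegral_congr hHy, lintegral_indicator measurableSet_Ioc,
                lintegral_const_mul' _ _ hc2top]
      · rw [if_neg hd]; exact zero_le
    have hstep3 : ∀ t, (∫⁻ y, H y t) ≤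
        (Set.Ioi (k₁ * r)).indicator (fun t => (c1 * M) * w t) t := by
      intro t
      by_cases hti : t ∈ Set.Ioi (k₁ * r)
      · rw [Set.indicator_of_mem hti]
        have ht0 : 0 < t := lt_trans hk₁r hti
        have htk₁ : 0 < t / k₁ := div_pos ht0 hk₁
        have hyp : ∀ y, H y t ≤ (Metric.ball x (t / k₁)).indicator F y *
            (ENNReal.ofReal ((k₂ / t) ^ n) * (ENNReal.ofReal C * ENNReal.ofReal (ρ t / t))) := by
          intro y
          simp only [hHdef]
          by_cases hc : r ≤ dist x y ∧ k₁ * dist x y < t ∧ t ≤ k₂ * dist x y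
          · obtain ⟨h1, h2, h3⟩ := hc
            rw [if_pos ⟨h1, h2, h3⟩]
            have hd0 : 0 < dist x y := lt_of_lt_of_le hr h1
            have hymem : y ∈ Metric.ball x (t / k₁) := by
              rw [Metric.mem_ball, dist_comm, lt_div_iff₀ hk₁]
              linarith
            rw [Set.indicator_of_mem hymem]
            have hdinv : (ENNReal.ofReal (dist x y ^ n))⁻¹ ≤ ENNReal.ofReal ((k₂ / t)^n) := by
              have hle' : (t / k₂) ^ n ≤ dist x y ^ n :=
                pow_le_pow_left₀ (by positivity) ((div_le_iff₀ hk₂).2 (by linarith)) n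
              have h5 := ENNReal.inv_le_inv' (ENNReal.ofReal_le_ofReal hle')
              rwa [← ENNReal.ofReal_inv_of_pos (pow_pos (div_pos ht0 hk₂) n), ← inv_pow,
                inv_div] at h5
            calc (F y * (ENNReal.ofReal (dist x y ^ n))⁻¹ * ENNReal.ofReal C) *
                ENNReal.ofReal (ρ t / t)
                = F y * (ENNReal.ofReal (dist x y ^ n))⁻¹ *
                  (ENNReal.ofReal C * ENNReal.ofReal (ρ t / t)) := by ring
              _ ≤ F y * ENNReal.ofReal ((k₂/t)^n) *
                  (ENNReal.ofReal C * ENNReal.ofReal (ρ t / t)) :=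
                  mul_le_mul_left (mul_le_mul_right hdinv _) _
              _ = F y * (ENNReal.ofReal ((k₂/t)^n) *
                  (ENNReal.ofReal C * ENNReal.ofReal (ρ t / t))) := by ring
          · rw [if_neg hc]; exact zero_le
        have hmidtop : ENNReal.ofReal ((k₂ / t) ^ n) *
            (ENNReal.ofReal C * ENNReal.ofReal (ρ t / t)) ≠ ⊤ :=
          ENNReal.mul_ne_top ENNReal.ofReal_ne_top
            (ENNReal.mul_ne_top ENNReal.ofReal_ne_top ENNReal.ofReal_ne_top)
        calc ∫⁻ y, H y t
            ≤ ∫⁻ y, (Metric.ball x (t/k₁)).indicator F y *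
              (ENNReal.ofReal ((k₂/t)^n) * (ENNReal.ofReal C * ENNReal.ofReal (ρ t / t))) :=
              lintegral_mono hyp
          _ = (∫⁻ y in Metric.ball x (t/k₁), F y) *
              (ENNReal.ofReal ((k₂/t)^n) * (ENNReal.ofReal C * ENNReal.ofReal (ρ t / t))) := by
              rw [lintegral_mul_const' _ _ hmidtop, lintegral_indicator measurableSet_ball]
          _ ≤ (volume (Metric.ball x (t/k₁)) * (ENNReal.ofReal (φ (t/k₁)))⁻¹ * M) *
              (ENNReal.ofReal ((k₂/t)^n) * (ENNReal.ofReal C * ENNReal.ofReal (ρ t / t))) := by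
              rw [hMdef]
              exact mul_le_mul_left (morrey_le n φ hφpos F x htk₁) _
          _ ≤ (c1 * M) * w t := by
              rw [Measure.addHaar_ball volume x htk₁.le, finrank_euclideanSpace_fin, ← hv₁def]
              have hφlow : c₀ * φ t ≤ φ (t / k₁) := by
                rcases le_total k₁ 1 with h | h
                · have htle : t ≤ t / k₁ := (le_div_iff₀ hk₁).2 (by nlinarith)
                  have h6 := hφmono t (t/k₁) ht0 htle
                  nlinarith [hφpos t ht0, min_le_left 1 (k₁⁻¹ ^ n)]
                · have htge : t / k₁ ≤ t := div_le_self ht0.le h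
                  have h1 := isGq_pow_le n ⟨hφpos, hφmono, hφdec⟩ htk₁ htge
                  have h2 : (t/k₁)^n = t^n * (k₁⁻¹)^n := by
                    rw [div_pow, div_eq_mul_inv, inv_pow]
                  have h3 : t^n * ((k₁⁻¹)^n * φ t) ≤ t^n * φ (t/k₁) := by
                    calc t^n * ((k₁⁻¹)^n * φ t) = (t/k₁)^n * φ t := by rw [h2]; ring
                      _ ≤ t^n * φ (t/k₁) := h1
                  have h4 := le_of_mul_le_mul_left h3 (pow_pos ht0 n)
                  nlinarith [hφpos t ht0, min_le_right (1:ℝ) (k₁⁻¹ ^ n)]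
              have hinv2 : (ENNReal.ofReal (φ (t/k₁)))⁻¹ ≤
                  (ENNReal.ofReal c₀)⁻¹ * (ENNReal.ofReal (φ t))⁻¹ := by
                have h7 := ENNReal.inv_le_inv' (ENNReal.ofReal_le_ofReal hφlow)
                rwa [ENNReal.ofReal_mul hc₀.le,
                  ENNReal.mul_inv (Or.inl (ENNReal.ofReal_pos.2 hc₀).ne')
                    (Or.inl ENNReal.ofReal_ne_top)] at h7
              have hpoweq : ENNReal.ofReal ((k₂/t)^n) * ENNReal.ofReal ((t/k₁)^n) =
                  ENNReal.ofReal ((k₂/k₁)^n) := by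
                rw [← ENNReal.ofReal_mul (by positivity), ← mul_pow]
                congr 2
                field_simp
              calc (ENNReal.ofReal ((t/k₁)^n) * v₁ * (ENNReal.ofReal (φ (t/k₁)))⁻¹ * M) *
                  (ENNReal.ofReal ((k₂/t)^n) * (ENNReal.ofReal C * ENNReal.ofReal (ρ t/t)))
                  = ENNReal.ofReal C * (ENNReal.ofReal ((k₂/t)^n) * ENNReal.ofReal ((t/k₁)^n)) *
                    v₁ * (ENNReal.ofReal (φ (t/k₁)))⁻¹ * M * ENNReal.ofReal (ρ t / t) := by
                    ring
                _ ≤ ENNReal.ofReal C * (ENNReal.ofReal ((k₂/t)^n) * ENNReal.ofReal ((t/k₁)^n)) *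
                    v₁ * ((ENNReal.ofReal c₀)⁻¹ * (ENNReal.ofReal (φ t))⁻¹) * M *
                    ENNReal.ofReal (ρ t / t) :=
                    mul_le_mul_left (mul_le_mul_left
                      (mul_le_mul_right hinv2 _) M) _
                _ = (c1 * M) * w t := by
                    rw [hpoweq, hc1def, hwdef]; ring
      · rw [Set.indicator_of_notMem hti]
        have hzero : ∀ y, H y t = 0 := by
          intro y
          simp only [hHdef]
          rw [if_neg]
          rintro ⟨h1, h2, h3⟩
          have h5 : k₁ * r ≤ k₁ * dist x y := by nlinarith [lt_of_lt_of_le hr h1]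
          exact hti (Set.mem_Ioi.2 (lt_of_le_of_lt h5 h2))
        rw [lintegral_congr hzero, lintegral_zero]
    calc ∫⁻ y, g₂ x y ≤ ∫⁻ y, ∫⁻ t, H y t := lintegral_mono hstep1
      _ = ∫⁻ t, ∫⁻ y, H y t := lintegral_lintegral_swap hHmeas.aemeasurable
      _ ≤ ∫⁻ t, (Set.Ioi (k₁*r)).indicator (fun t => (c1*M) * w t) t := lintegral_mono hstep3
      _ = ∫⁻ t in Set.Ioi (k₁*r), (c1*M) * w t := lintegral_indicator measurableSet_Ioi _
      _ = c1 * M * Sfull := by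
          rw [lintegral_const_mul' _ _ (ENNReal.mul_ne_top hc1top hM), hSfulldef]
  have Hfar : ENNReal.ofReal (ψ r) * ((volume B)⁻¹ * ∫⁻ x in B, ∫⁻ y, g₂ x y) ≤ Dfar * M := by
    have h1 : ∫⁻ x in B, ∫⁻ y, g₂ x y ≤ volume B * (c1 * M * Sfull) := by
      calc ∫⁻ x in B, ∫⁻ y, g₂ x y ≤ ∫⁻ _x in B, c1 * M * Sfull :=
            setLIntegral_mono' measurableSet_ball (fun x _ => hfarpt x)
        _ = volume B * (c1 * M * Sfull) := by rw [setLIntegral_const, mul_comm]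
    calc ENNReal.ofReal (ψ r) * ((volume B)⁻¹ * ∫⁻ x in B, ∫⁻ y, g₂ x y)
        ≤ ENNReal.ofReal (ψ r) * ((volume B)⁻¹ * (volume B * (c1 * M * Sfull))) :=
          mul_le_mul_right (mul_le_mul_right h1 _) _
      _ = ((volume B)⁻¹ * volume B) * (ENNReal.ofReal (ψ r) * (c1 * M * Sfull)) := by ring
      _ = ENNReal.ofReal (ψ r) * (c1 * M * Sfull) := by rw [hcancelB, one_mul]
      _ ≤ ENNReal.ofReal (ψ r) * (c1 * M * (cS * ENNReal.ofReal (C₁ / ψ r))) :=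
          mul_le_mul_right (mul_le_mul_right hSfull _) _
      _ = (c1 * cS) * (ENNReal.ofReal (ψ r) * ENNReal.ofReal (C₁/ψ r)) * M := by ring
      _ = Dfar * M := by
          rw [← ENNReal.ofReal_mul hψr.le, mul_comm (ψ r) (C₁ / ψ r),
            div_mul_cancel₀ _ hψr.ne', hDfardef]
  calc ENNReal.ofReal (ψ r) * ((volume B)⁻¹ * ∫⁻ x in B, fracIntegral n ρ F x)
      = ENNReal.ofReal (ψ r) * ((volume B)⁻¹ * ∫⁻ x in B, ∫⁻ y, g₁ x y) +
        ENNReal.ofReal (ψ r) * ((volume B)⁻¹ * ∫⁻ x in B, ∫⁻ y, g₂ x y) := by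
        rw [hIsplit, mul_add, mul_add]
    _ ≤ Dnear * M + Dfar * M := add_le_add Hnear Hfar
    _ = T * M := by rw [hTdef, add_mul]
    _ ≤ ENNReal.ofReal (T.toReal + 1) * M := mul_le_mul_left hTle M
end
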